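/- arXiv:1401.1649 — 7 statements merged into one kernel-verified Lean document; each statement's English description precedes it below -/
import Mathlib

section
/- Let 0 < α ≤ 1 be real and set κ_α = min{ α/4, α·8^{−(α+1)}, 1 − 8^{−α} } > 0. Then for all reals d₁ ≥ 1 and d₂ ≥ 1 one has (d₁ + d₂)^α ≥ d₁^α + κ_α · min( d₂^α, d₂ · d₁^{α−1} ). -/
/-- The constant `κ_α = min { α/4, α·8^{-(α+1)}, 1 - 8^{-α} }`. -/
noncomputable def kappaConst (α : ℝ) : ℝ :=
  min (min (α / 4) (α * (8 : ℝ) ^ (-(α + 1)))) (1 - (8 : ℝ) ^ (-α))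

/-- Let `0 < α ≤ 1` and set `κ_α = min{α/4, α·8^{−(α+1)}, 1 − 8^{−α}} > 0`. Then for all
reals `d₁ ≥ 1` and `d₂ ≥ 1` one has
`(d₁ + d₂)^α ≥ d₁^α + κ_α · min(d₂^α, d₂·d₁^{α−1})`. -/
theorem statement1 (α : ℝ) (hα0 : 0 < α) (hα1 : α ≤ 1) :
    0 < kappaConst α ∧
      ∀ d₁ d₂ : ℝ, 1 ≤ d₁ → 1 ≤ d₂ →
        (d₁ + d₂) ^ α ≥ d₁ ^ α + kappaConst α * min (d₂ ^ α) (d₂ * d₁ ^ (α - 1)) := by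
  have h8 : (1 : ℝ) < 8 := by norm_num
  have h8a : (8 : ℝ) ^ (-α) < 1 :=
    Real.rpow_lt_one_of_one_lt_of_neg h8 (by linarith)
  have hc0 : 0 < α * (8 : ℝ) ^ (-(α + 1)) := by positivity
  have hκpos : 0 < kappaConst α := by
    apply lt_min (lt_min (by linarith) hc0) (by linarith)
  refine ⟨hκpos, fun d₁ d₂ h1 h2 => ?_⟩
  have hd₁ : (0 : ℝ) < d₁ := by linarith
  have hd₂ : (0 : ℝ) < d₂ := by linarith
  have hκ1 : kappaConst α ≤ α * (8 : ℝ) ^ (-(α + 1)) :=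
    le_trans (min_le_left _ _) (min_le_right _ _)
  have hκ2 : kappaConst α ≤ 1 - (8 : ℝ) ^ (-α) := min_le_right _ _
  have hmin1 : min (d₂ ^ α) (d₂ * d₁ ^ (α - 1)) ≤ d₂ ^ α := min_le_left _ _
  have hmin2 : min (d₂ ^ α) (d₂ * d₁ ^ (α - 1)) ≤ d₂ * d₁ ^ (α - 1) := min_le_right _ _
  have hminn : 0 ≤ min (d₂ ^ α) (d₂ * d₁ ^ (α - 1)) := by
    apply le_min <;> positivity
  rcases le_or_gt (8 * d₁) d₂ with h | h
  · -- case d₂ ≥ 8 d₁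
    have hA : d₁ ^ α ≤ (d₂ / 8) ^ α :=
      Real.rpow_le_rpow hd₁.le (by linarith) hα0.le
    have hB : (d₂ / 8) ^ α = d₂ ^ α * (8 : ℝ) ^ (-α) := by
      rw [Real.div_rpow hd₂.le (by norm_num), Real.rpow_neg (by norm_num), div_eq_mul_inv]
    have hC : d₂ ^ α ≤ (d₁ + d₂) ^ α :=
      Real.rpow_le_rpow hd₂.le (by linarith) hα0.le
    have hD : kappaConst α * min (d₂ ^ α) (d₂ * d₁ ^ (α - 1))
        ≤ (1 - (8 : ℝ) ^ (-α)) * d₂ ^ α :=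
      mul_le_mul hκ2 hmin1 hminn (by linarith)
    rw [hB] at hA
    nlinarith [Real.rpow_nonneg hd₂.le α]
  · -- case d₂ < 8 d₁
    set t : ℝ := d₂ / d₁ with ht
    have ht0 : 0 < t := div_pos hd₂ hd₁
    have ht8 : t ≤ 8 := by
      rw [div_le_iff₀ hd₁]; linarith
    -- chord inequality for x ↦ x^α on [1, 9]
    have chord := (Real.concaveOn_rpow hα0.le hα1).2
      (by norm_num : (1:ℝ) ∈ Set.Ici (0:ℝ)) (by norm_num : (9:ℝ) ∈ Set.Ici (0:ℝ))
      (show (0:ℝ) ≤ 1 - t / 8 by linarith) (show (0:ℝ) ≤ t / 8 by linarith)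
      (show (1 - t / 8) + t / 8 = 1 by ring)
    simp only [smul_eq_mul, Real.one_rpow] at chord
    have heq : (1 - t / 8) * 1 + t / 8 * 9 = 1 + t := by ring
    rw [heq] at chord
    -- 9^α ≥ 1 + α
    have hlog9 : (1 : ℝ) ≤ Real.log 9 := by
      rw [Real.le_log_iff_exp_le (by norm_num)]
      have := Real.exp_one_lt_d9
      linarith
    have h9 : 1 + α ≤ (9 : ℝ) ^ α := by
      rw [Real.rpow_def_of_pos (by norm_num)]
      have h1e := Real.add_one_le_exp (Real.log 9 * α)
      nlinarith
    -- 8^{-(α+1)} ≤ 1/8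
    have h8e : (8 : ℝ) ^ (-(α + 1)) ≤ 1 / 8 := by
      have := Real.rpow_le_rpow_of_exponent_le (le_of_lt h8)
        (show -(α + 1) ≤ -1 by linarith)
      rwa [Real.rpow_neg_one, inv_eq_one_div] at this
    -- key: (1 + t)^α ≥ 1 + α·8^{-(α+1)}·t
    have hkey : 1 + α * (8 : ℝ) ^ (-(α + 1)) * t ≤ (1 + t) ^ α := by
      have hca : α * (8 : ℝ) ^ (-(α + 1)) * t ≤ α / 8 * t := by
        apply mul_le_mul_of_nonneg_right _ ht0.le
        nlinarith
      nlinarith [mul_le_mul_of_nonneg_left h9 (by positivity : (0:ℝ) ≤ t / 8)]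
    -- multiply by d₁^α
    have hmul : (d₁ + d₂) ^ α = d₁ ^ α * (1 + t) ^ α := by
      rw [← Real.mul_rpow hd₁.le (by positivity)]
      congr 1
      rw [ht, mul_add, mul_one, mul_div_cancel₀ d₂ hd₁.ne']
    have hpow : d₂ * d₁ ^ (α - 1) = d₁ ^ α * t := by
      rw [Real.rpow_sub hd₁, Real.rpow_one, ht]
      field_simp
    have hd1p : 0 < d₁ ^ α := Real.rpow_pos_of_pos hd₁ α
    have hstep : d₁ ^ α * (1 + α * (8 : ℝ) ^ (-(α + 1)) * t) ≤ d₁ ^ α * (1 + t) ^ α :=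
      mul_le_mul_of_nonneg_left hkey hd1p.le
    have hlast : kappaConst α * min (d₂ ^ α) (d₂ * d₁ ^ (α - 1))
        ≤ α * (8 : ℝ) ^ (-(α + 1)) * (d₁ ^ α * t) := by
      rw [← hpow]
      exact mul_le_mul hκ1 hmin2 hminn hc0.le
    rw [ge_iff_le, hmul]
    nlinarith
end

section
/- Let 0 < α ≤ 1 be real and set κ_α = min{ α/4, α·8^{−(α+1)}, 1 − 8^{−α} } > 0. Then for all reals d₁ ≥ 1, d₂ ≥ 1 and N with d₁ + d₂ ≤ N, one has (d₁ + d₂)^α ≥ d₁^α + κ_α · d₂ · N^{α−1}. -/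
/-- Let `0 < α ≤ 1` and set `κ_α = min{α/4, α·8^{−(α+1)}, 1 − 8^{−α}} > 0`. Then for all
reals `d₁ ≥ 1`, `d₂ ≥ 1` and `N` with `d₁ + d₂ ≤ N`, one has
`(d₁ + d₂)^α ≥ d₁^α + κ_α · d₂ · N^{α−1}`. -/
theorem statement2 (α : ℝ) (hα0 : 0 < α) (hα1 : α ≤ 1) :
    0 < kappaConst α ∧
      ∀ d₁ d₂ N : ℝ, 1 ≤ d₁ → 1 ≤ d₂ → d₁ + d₂ ≤ N →
        (d₁ + d₂) ^ α ≥ d₁ ^ α + kappaConst α * d₂ * N ^ (α - 1) := by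
  have hκpos : 0 < kappaConst α := by
    refine lt_min (lt_min (by linarith) ?_) ?_
    · exact mul_pos hα0 (Real.rpow_pos_of_pos (by norm_num) _)
    · have : (8 : ℝ) ^ (-α) < 1 :=
        Real.rpow_lt_one_of_one_lt_of_neg (by norm_num) (by linarith)
      linarith
  have hκα : kappaConst α ≤ α := by
    have := min_le_left (min (α / 4) (α * (8 : ℝ) ^ (-(α + 1)))) (1 - (8 : ℝ) ^ (-α))
    have := min_le_left (α / 4) (α * (8 : ℝ) ^ (-(α + 1)))
    unfold kappaConst
    linarith
  refine ⟨hκpos, fun d₁ d₂ N h₁ h₂ hN => ?_⟩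
  set s : ℝ := d₁ + d₂ with hs_def
  have hs : 0 < s := by positivity
  have hspow : 0 < s ^ (α - 1) := Real.rpow_pos_of_pos hs _
  -- Bernoulli: (d₁/s)^α ≤ 1 + α * (d₁/s - 1)
  have hu : -1 ≤ d₁ / s - 1 := by
    have : 0 ≤ d₁ / s := by positivity
    linarith
  have hb := rpow_one_add_le_one_add_mul_self hu hα0.le hα1
  rw [add_sub_cancel] at hb
  -- multiply by s^α
  have hsα : 0 < s ^ α := Real.rpow_pos_of_pos hs _
  have hdiv : (d₁ / s) ^ α = d₁ ^ α / s ^ α :=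
    Real.div_rpow (by linarith) hs.le α
  have hmul : d₁ ^ α ≤ (1 + α * (d₁ / s - 1)) * s ^ α := by
    have := mul_le_mul_of_nonneg_right hb hsα.le
    rw [hdiv, div_mul_cancel₀] at this
    · exact this
    · exact ne_of_gt hsα
  have hsub : s ^ (α - 1) = s ^ α / s := by
    rw [Real.rpow_sub hs, Real.rpow_one]
  have key : d₁ ^ α + α * d₂ * s ^ (α - 1) ≤ s ^ α := by
    have h1 : (1 + α * (d₁ / s - 1)) * s ^ α = s ^ α - α * d₂ * (s ^ α / s) := by
      have hd : d₁ / s - 1 = -(d₂ / s) := by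
        rw [hs_def]; field_simp; ring
      rw [hd]
      field_simp
      ring
    rw [h1, ← hsub] at hmul
    linarith
  -- compare N^(α-1) with s^(α-1)
  have hNpow : N ^ (α - 1) ≤ s ^ (α - 1) :=
    Real.rpow_le_rpow_of_nonpos hs hN (by linarith)
  have hNnn : 0 ≤ N ^ (α - 1) := Real.rpow_nonneg (by linarith) _
  have : kappaConst α * d₂ * N ^ (α - 1) ≤ α * d₂ * s ^ (α - 1) := by
    have h2 : kappaConst α * d₂ ≤ α * d₂ := by nlinarith
    calc kappaConst α * d₂ * N ^ (α - 1) ≤ kappaConst α * d₂ * s ^ (α - 1) := by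
          apply mul_le_mul_of_nonneg_left hNpow; positivity
      _ ≤ α * d₂ * s ^ (α - 1) := mul_le_mul_of_nonneg_right h2 hspow.le
  linarith [key]
end

section
/- Let m and p be integers with 2 ≤ p < m. There exist a sequence (r_i)_{i∈ℕ} of positive real numbers and a sequence (k_i)_{i∈ℕ} of positive integers such that Σ_{i∈ℕ} r_i = 1/8, Σ_{i∈ℕ} r_i^{m−p} · k_i^p < +∞, and Σ_{i∈ℕ} r_i^{m−p} · k_i^{2p} = +∞. -/
open Filter

/-- Let `m`, `p` be integers with `2 ≤ p < m`. There exist a sequence `(r_i)` of positive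
reals and a sequence `(k_i)` of positive integers such that `Σ r_i = 1/8`,
`Σ r_i^{m−p}·k_i^p < +∞`, and `Σ r_i^{m−p}·k_i^{2p} = +∞` (partial sums tend to `+∞`). -/
theorem statement4 (m p : ℕ) (hp : 2 ≤ p) (hpm : p < m) :
    ∃ (r : ℕ → ℝ) (k : ℕ → ℕ),
      (∀ i, 0 < r i) ∧ (∀ i, 1 ≤ k i) ∧
      HasSum r (1 / 8) ∧
      Summable (fun i => r i ^ (m - p) * (k i : ℝ) ^ p) ∧
      Tendsto (fun n => ∑ i ∈ Finset.range n, r i ^ (m - p) * (k i : ℝ) ^ (2 * p))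
        atTop atTop := by
  set d := m - p with hd
  have hd1 : 1 ≤ d := by omega
  set q : ℕ → ℕ := fun i => (d * (i + 4) + 2 * p - 1) / (2 * p) with hq
  set r : ℕ → ℝ := fun i => (1/16) * (1/2)^i with hrdef
  set k : ℕ → ℕ := fun i => 2 ^ (q i) with hkdef
  have hb : 0 < 2 * p := by omega
  -- nat inequalities
  have hlow : ∀ i, d * (i + 4) ≤ 2 * p * q i := by
    intro i
    have h1 := Nat.div_add_mod (d * (i + 4) + 2 * p - 1) (2 * p)
    have h2 := Nat.mod_lt (d * (i + 4) + 2 * p - 1) hb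
    simp only [hq]
    omega
  have hhigh : ∀ i, 2 * p * q i ≤ d * (i + 4) + 2 * p := by
    intro i
    have h1 := Nat.div_add_mod (d * (i + 4) + 2 * p - 1) (2 * p)
    simp only [hq]
    omega
  -- real identity
  have h2pos : (0:ℝ) < 2 := two_pos
  have hr : ∀ i : ℕ, r i = (2:ℝ) ^ (-((i:ℝ) + 4)) := by
    intro i
    rw [show -((i:ℝ)+4) = -(((i+4:ℕ):ℝ)) by push_cast; ring, Real.rpow_neg h2pos.le,
      Real.rpow_natCast, pow_add]
    simp [hrdef, one_div, inv_pow]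
    ring
  have key : ∀ (i e : ℕ), r i ^ d * (k i : ℝ) ^ e =
      (2:ℝ) ^ ((e * q i : ℝ) - d * ((i:ℝ) + 4)) := by
    intro i e
    rw [hr i, ← Real.rpow_natCast ((2:ℝ) ^ (-((i:ℝ)+4))) d, ← Real.rpow_mul h2pos.le]
    have hk : (k i : ℝ) ^ e = (2:ℝ) ^ ((e * q i : ℕ) : ℝ) := by
      rw [Real.rpow_natCast]
      simp [hkdef, ← pow_mul]
      ring_nf
    rw [hk, ← Real.rpow_add h2pos]
    push_cast
    ring_nf
  have hrpos : ∀ i, 0 < r i := by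
    intro i; simp only [hrdef]; positivity
  refine ⟨r, k, hrpos, fun i => Nat.one_le_two_pow, ?_, ?_, ?_⟩
  · -- HasSum
    have := (hasSum_geometric_of_lt_one (by norm_num : (0:ℝ) ≤ 1/2)
      (by norm_num : (1/2:ℝ) < 1)).mul_left (1/16)
    rw [show (1/8:ℝ) = 1/16 * (1 - 1/2)⁻¹ by norm_num]
    exact this
  · -- Summable
    have hc0 : (0:ℝ) ≤ (2:ℝ) ^ (-(1/2:ℝ)) := Real.rpow_nonneg h2pos.le _
    have hc1 : (2:ℝ) ^ (-(1/2:ℝ)) < 1 :=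
      Real.rpow_lt_one_of_one_lt_of_neg one_lt_two (by norm_num)
    refine Summable.of_nonneg_of_le (fun i => by positivity)
      (fun i => ?_) (((summable_geometric_of_lt_one hc0 hc1).mul_left ((2:ℝ)^(p:ℕ))))
    rw [key i p]
    have : ((2:ℝ)^(p:ℕ)) * ((2:ℝ) ^ (-(1/2:ℝ)))^i = (2:ℝ) ^ ((p:ℝ) + (-(1/2:ℝ)) * i) := by
      rw [Real.rpow_add h2pos, Real.rpow_natCast, ← Real.rpow_natCast ((2:ℝ)^(-(1/2:ℝ))) i,
        ← Real.rpow_mul h2pos.le]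
    rw [this]
    apply Real.rpow_le_rpow_of_exponent_le one_le_two
    have hcast : (2:ℝ) * (p * q i) ≤ d * ((i:ℝ) + 4) + 2 * p := by
      have := hhigh i
      have : ((2 * p * q i : ℕ) : ℝ) ≤ ((d * (i + 4) + 2 * p : ℕ) : ℝ) := by exact_mod_cast this
      push_cast at this
      linarith
    have hdi : (1:ℝ) ≤ d := by exact_mod_cast hd1
    have hi0 : (0:ℝ) ≤ (i:ℝ) := Nat.cast_nonneg i
    nlinarith [hcast, hdi, hi0]
  · -- Divergence
    refine tendsto_atTop_mono ?_ (tendsto_natCast_atTop_atTop (R := ℝ))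
    · intro n
      have : ∀ i ∈ Finset.range n, (1:ℝ) ≤ r i ^ d * (k i : ℝ) ^ (2 * p) := by
        intro i _
        rw [key i (2*p)]
        calc (1:ℝ) = (2:ℝ) ^ (0:ℝ) := (Real.rpow_zero 2).symm
        _ ≤ _ := by
            apply Real.rpow_le_rpow_of_exponent_le one_le_two
            have := hlow i
            have hcast : (d * ((i:ℝ) + 4)) ≤ 2 * p * q i := by
              have : ((d * (i+4) : ℕ) : ℝ) ≤ ((2 * p * q i : ℕ) : ℝ) := by exact_mod_cast this
              push_cast at this; linarith
            push_cast
            linarith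
      calc (n:ℝ) = ∑ _i ∈ Finset.range n, (1:ℝ) := by simp
      _ ≤ _ := Finset.sum_le_sum this
end

section
/- Let Ω ⊆ ℝ^m be a bounded open set, let (Ω_p)_{p∈P} be a finite family of pairwise disjoint open convex subsets of Ω, and let A ⊆ Ω be a finite set with A ∩ ∂Ω_p = ∅ for every p ∈ P. Then ℒ^α_brbd(A, ∂Ω) ≥ Σ_{p∈P} ℒ^α_brbd(A ∩ Ω_p, ∂Ω_p). -/
open scoped ENNReal
open scoped Classical

noncomputable section

/-- Points of `ℝ^m` with the Euclidean norm. -/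
abbrev Pt (m : ℕ) : Type := EuclideanSpace ℝ (Fin m)

/-- A finite weighted directed graph in `ℝ^m`: a finite vertex set, a finite set of
directed segments `e = (e⁻, e⁺)`, and a multiplicity function. -/
structure BrGraph (m : ℕ) where
  V : Finset (Pt m)
  E : Finset (Pt m × Pt m)
  d : Pt m × Pt m → ℕ

/-- `G` is a weighted directed graph connecting the finite set `A` to the boundary of `Ω`:
`A ⊆ V(G) ⊆ cl Ω`; edges have distinct endpoints in `V(G)`; no edge appears with both
orientations; multiplicities are `≥ 1`; and the Kirchhoff balance law holds at every
vertex not on `∂Ω`. -/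
def BrGraph.IsConn {m : ℕ} (G : BrGraph m) (A : Finset (Pt m)) (Ω : Set (Pt m)) : Prop :=
  A ⊆ G.V ∧
  (G.V : Set (Pt m)) ⊆ closure Ω ∧
  (∀ e ∈ G.E, e.1 ∈ G.V ∧ e.2 ∈ G.V ∧ e.1 ≠ e.2) ∧
  (∀ e ∈ G.E, (e.2, e.1) ∉ G.E) ∧
  (∀ e ∈ G.E, 1 ≤ G.d e) ∧
  ∀ a ∈ G.V, a ∉ frontier Ω →
    (∑ e ∈ G.E.filter (fun e => e.1 = a), G.d e) =
      (∑ e ∈ G.E.filter (fun e => e.2 = a), G.d e) + (if a ∈ A then 1 else 0)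

/-- The cost `W_α(G) = ∑_{e ∈ E(G)} d(e)^α · ℓ(e)` where `ℓ(e) = |e⁺ − e⁻|`. -/
def BrGraph.cost {m : ℕ} (α : ℝ) (G : BrGraph m) : ℝ :=
  ∑ e ∈ G.E, (G.d e : ℝ) ^ α * ‖e.2 - e.1‖

/-- The branched connection `ℒ^α_brbd(A, ∂Ω) = inf { W_α(G) : G ∈ 𝒢(A, ∂Ω) }`
(valued in `[0, ∞]`, equal to `∞` if no connecting graph exists). -/
def Lbrbd (m : ℕ) (α : ℝ) (A : Finset (Pt m)) (Ω : Set (Pt m)) : ℝ≥0∞ :=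
  ⨅ (G : BrGraph m) (_ : G.IsConn A Ω), ENNReal.ofReal (G.cost α)

namespace Stmt5

variable {m : ℕ}

/-- The affine parametrization of the segment of an edge. -/
def lmap (e : Pt m × Pt m) : ℝ →ᵃ[ℝ] Pt m := AffineMap.lineMap e.1 e.2

lemma lmap_cont (e : Pt m × Pt m) : Continuous (lmap e) := AffineMap.lineMap_continuous

lemma lmap_zero (e : Pt m × Pt m) : lmap e 0 = e.1 := AffineMap.lineMap_apply_zero _ _
lemma lmap_one (e : Pt m × Pt m) : lmap e 1 = e.2 := AffineMap.lineMap_apply_one _ _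

lemma lmap_inj {e : Pt m × Pt m} (h : e.1 ≠ e.2) : Function.Injective (lmap e) :=
  AffineMap.lineMap_injective ℝ h

/-- The parameter set of the part of the edge inside `S`. -/
def Tset (S : Set (Pt m)) (e : Pt m × Pt m) : Set ℝ := Set.Icc 0 1 ∩ lmap e ⁻¹' S

lemma Tset_subset_Icc {S : Set (Pt m)} {e} : Tset S e ⊆ Set.Icc (0:ℝ) 1 := Set.inter_subset_left

lemma Tset_bddBelow {S : Set (Pt m)} {e} : BddBelow (Tset S e) :=
  (bddBelow_Icc : BddBelow (Set.Icc (0:ℝ) 1)).mono Tset_subset_Icc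

lemma Tset_bddAbove {S : Set (Pt m)} {e} : BddAbove (Tset S e) :=
  (bddAbove_Icc (a := (0:ℝ)) (b := 1)).mono Tset_subset_Icc

lemma exists_lt_of_mem {S : Set (Pt m)} (hS : IsOpen S) {e} {t : ℝ}
    (ht : t ∈ Tset S e) (h0 : 0 < t) : ∃ t' ∈ Tset S e, t' < t := by
  have hopen : IsOpen (lmap e ⁻¹' S) := hS.preimage (lmap_cont e)
  obtain ⟨ε, hε, hball⟩ := Metric.isOpen_iff.1 hopen t ht.2
  refine ⟨max 0 (t - ε / 2), ⟨⟨le_max_left _ _, ?_⟩, ?_⟩, ?_⟩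
  · exact max_le (le_trans zero_le_one le_rfl |>.trans (le_of_eq rfl)) (by nlinarith [ht.1.2])
  · apply hball
    simp only [Metric.mem_ball, Real.dist_eq, abs_lt]
    constructor <;>
      cases' max_cases 0 (t - ε / 2) with h h <;> rw [h.1] <;> linarith
  · exact max_lt h0 (by linarith)

lemma exists_gt_of_mem {S : Set (Pt m)} (hS : IsOpen S) {e} {t : ℝ}
    (ht : t ∈ Tset S e) (h1 : t < 1) : ∃ t' ∈ Tset S e, t < t' := by
  have hopen : IsOpen (lmap e ⁻¹' S) := hS.preimage (lmap_cont e)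
  obtain ⟨ε, hε, hball⟩ := Metric.isOpen_iff.1 hopen t ht.2
  refine ⟨min 1 (t + ε / 2), ⟨⟨?_, min_le_left _ _⟩, ?_⟩, ?_⟩
  · cases' min_cases 1 (t + ε / 2) with h h <;> rw [h.1] <;> [linarith; linarith [ht.1.1]]
  · apply hball
    simp only [Metric.mem_ball, Real.dist_eq, abs_lt]
    constructor <;> cases' min_cases 1 (t + ε / 2) with h h <;> rw [h.1] <;> linarith
  · exact lt_min h1 (by linarith)

lemma sInf_Tset_mem_Icc {S : Set (Pt m)} {e} (hne : (Tset S e).Nonempty) :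
    sInf (Tset S e) ∈ Set.Icc (0:ℝ) 1 := by
  obtain ⟨t, ht⟩ := hne
  exact ⟨le_csInf ⟨t, ht⟩ fun x hx => hx.1.1,
    le_trans (csInf_le Tset_bddBelow ht) ht.1.2⟩

lemma sSup_Tset_mem_Icc {S : Set (Pt m)} {e} (hne : (Tset S e).Nonempty) :
    sSup (Tset S e) ∈ Set.Icc (0:ℝ) 1 := by
  obtain ⟨t, ht⟩ := hne
  exact ⟨le_trans ht.1.1 (le_csSup Tset_bddAbove ht),
    csSup_le ⟨t, ht⟩ fun x hx => hx.1.2⟩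

lemma sInf_lt_sSup {S : Set (Pt m)} (hS : IsOpen S) {e} (hne : (Tset S e).Nonempty) :
    sInf (Tset S e) < sSup (Tset S e) := by
  obtain ⟨t, ht⟩ := hne
  rcases lt_or_eq_of_le ht.1.1 with h0 | h0
  · obtain ⟨t', ht', hlt⟩ := exists_lt_of_mem hS ht h0
    exact lt_of_le_of_lt (csInf_le Tset_bddBelow ht') (lt_of_lt_of_le hlt (le_csSup Tset_bddAbove ht))
  · obtain ⟨t', ht', hlt⟩ := exists_gt_of_mem hS ht (by rw [← h0]; norm_num)
    calc sInf (Tset S e) ≤ t := csInf_le Tset_bddBelow ht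
      _ < t' := hlt
      _ ≤ _ := le_csSup Tset_bddAbove ht'

lemma sInf_eq_zero_of_mem {S : Set (Pt m)} (hS : IsOpen S) {e}
    (h : sInf (Tset S e) ∈ Tset S e) : sInf (Tset S e) = 0 := by
  by_contra h0
  have hpos : 0 < sInf (Tset S e) := lt_of_le_of_ne h.1.1 (Ne.symm h0)
  obtain ⟨t', ht', hlt⟩ := exists_lt_of_mem hS h hpos
  exact absurd (csInf_le Tset_bddBelow ht') (not_le.2 hlt)

lemma sSup_eq_one_of_mem {S : Set (Pt m)} (hS : IsOpen S) {e}
    (h : sSup (Tset S e) ∈ Tset S e) : sSup (Tset S e) = 1 := by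
  by_contra h1
  have hlt1 : sSup (Tset S e) < 1 := lt_of_le_of_ne h.1.2 h1
  obtain ⟨t', ht', hlt⟩ := exists_gt_of_mem hS h hlt1
  exact absurd (le_csSup Tset_bddAbove ht') (not_le.2 hlt)

lemma lmap_sInf_mem_closure {S : Set (Pt m)} {e} (hne : (Tset S e).Nonempty) :
    lmap e (sInf (Tset S e)) ∈ closure S :=
  map_mem_closure (lmap_cont e) (csInf_mem_closure hne Tset_bddBelow) fun _ hx => hx.2

lemma lmap_sSup_mem_closure {S : Set (Pt m)} {e} (hne : (Tset S e).Nonempty) :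
    lmap e (sSup (Tset S e)) ∈ closure S :=
  map_mem_closure (lmap_cont e) (csSup_mem_closure hne Tset_bddAbove) fun _ hx => hx.2

lemma Ioo_subset_Tset {S : Set (Pt m)} (hconv : Convex ℝ S) {e} :
    Set.Ioo (sInf (Tset S e)) (sSup (Tset S e)) ⊆ Tset S e := by
  intro t ht
  have hne : (Tset S e).Nonempty := by
    by_contra h
    rw [Set.not_nonempty_iff_eq_empty] at h
    rw [h] at ht
    simp only [Real.sInf_empty, Real.sSup_empty, Set.mem_Ioo] at ht
    linarith [ht.1, ht.2]
  have hTconv : Convex ℝ (Tset S e) := (convex_Icc 0 1).inter (hconv.affine_preimage (lmap e))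
  obtain ⟨x, hx, hxt⟩ := exists_lt_of_csInf_lt hne ht.1
  obtain ⟨y, hy, hty⟩ := exists_lt_of_lt_csSup hne ht.2
  exact hTconv.ordConnected.out hx hy ⟨hxt.le, hty.le⟩


/-- Clip an edge to the closure of `S`: the (nondegenerate) maximal subsegment meeting `S`. -/
def clip (S : Set (Pt m)) (e : Pt m × Pt m) : Option (Pt m × Pt m) :=
  if e.1 ≠ e.2 ∧ (Tset S e).Nonempty then
    some (lmap e (sInf (Tset S e)), lmap e (sSup (Tset S e))) else none

lemma clip_spec {S : Set (Pt m)} {e f} (h : clip S e = some f) :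
    e.1 ≠ e.2 ∧ (Tset S e).Nonempty ∧
      f = (lmap e (sInf (Tset S e)), lmap e (sSup (Tset S e))) := by
  unfold clip at h
  split_ifs at h with hc
  exact ⟨hc.1, hc.2, (Option.some_inj.1 h).symm⟩

lemma clip_eq_some {S : Set (Pt m)} {e} (hne : e.1 ≠ e.2) (hT : (Tset S e).Nonempty) :
    clip S e = some (lmap e (sInf (Tset S e)), lmap e (sSup (Tset S e))) := by
  unfold clip
  rw [if_pos ⟨hne, hT⟩]

lemma clip_ne {S : Set (Pt m)} (hS : IsOpen S) {e f} (h : clip S e = some f) :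
    f.1 ≠ f.2 := by
  obtain ⟨hne, hT, rfl⟩ := clip_spec h
  exact fun hEq => (ne_of_lt (sInf_lt_sSup hS hT)) (lmap_inj hne hEq)

lemma clip_fst_mem_closure {S : Set (Pt m)} {e f} (h : clip S e = some f) :
    f.1 ∈ closure S := by
  obtain ⟨-, hT, rfl⟩ := clip_spec h
  exact lmap_sInf_mem_closure hT

lemma clip_snd_mem_closure {S : Set (Pt m)} {e f} (h : clip S e = some f) :
    f.2 ∈ closure S := by
  obtain ⟨-, hT, rfl⟩ := clip_spec h
  exact lmap_sSup_mem_closure hT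

lemma clip_fst_of_mem {S : Set (Pt m)} (hS : IsOpen S) {e f} (h : clip S e = some f)
    (hf : f.1 ∈ S) : f.1 = e.1 := by
  obtain ⟨hne, hT, rfl⟩ := clip_spec h
  have hmem : sInf (Tset S e) ∈ Tset S e := ⟨sInf_Tset_mem_Icc hT, hf⟩
  rw [show (lmap e (sInf (Tset S e)), lmap e (sSup (Tset S e))).1 = lmap e (sInf (Tset S e)) from rfl,
    sInf_eq_zero_of_mem hS hmem, lmap_zero]

lemma clip_snd_of_mem {S : Set (Pt m)} (hS : IsOpen S) {e f} (h : clip S e = some f)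
    (hf : f.2 ∈ S) : f.2 = e.2 := by
  obtain ⟨hne, hT, rfl⟩ := clip_spec h
  have hmem : sSup (Tset S e) ∈ Tset S e := ⟨sSup_Tset_mem_Icc hT, hf⟩
  rw [show (lmap e (sInf (Tset S e)), lmap e (sSup (Tset S e))).2 = lmap e (sSup (Tset S e)) from rfl,
    sSup_eq_one_of_mem hS hmem, lmap_one]

lemma clip_of_fst_mem {S : Set (Pt m)} {e} (hne : e.1 ≠ e.2) (h1 : e.1 ∈ S) :
    ∃ f, clip S e = some f ∧ f.1 = e.1 := by
  have h0 : (0:ℝ) ∈ Tset S e := ⟨by norm_num, by rw [Set.mem_preimage, lmap_zero]; exact h1⟩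
  have hT : (Tset S e).Nonempty := ⟨0, h0⟩
  refine ⟨_, clip_eq_some hne hT, ?_⟩
  have : sInf (Tset S e) = 0 :=
    le_antisymm (csInf_le Tset_bddBelow h0) (sInf_Tset_mem_Icc hT).1
  rw [show (lmap e (sInf (Tset S e)), lmap e (sSup (Tset S e))).1 = lmap e (sInf (Tset S e)) from rfl,
    this, lmap_zero]

lemma clip_of_snd_mem {S : Set (Pt m)} {e} (hne : e.1 ≠ e.2) (h2 : e.2 ∈ S) :
    ∃ f, clip S e = some f ∧ f.2 = e.2 := by
  have h0 : (1:ℝ) ∈ Tset S e := ⟨by norm_num, by rw [Set.mem_preimage, lmap_one]; exact h2⟩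
  have hT : (Tset S e).Nonempty := ⟨1, h0⟩
  refine ⟨_, clip_eq_some hne hT, ?_⟩
  have : sSup (Tset S e) = 1 :=
    le_antisymm (sSup_Tset_mem_Icc hT).2 (le_csSup Tset_bddAbove h0)
  rw [show (lmap e (sInf (Tset S e)), lmap e (sSup (Tset S e))).2 = lmap e (sSup (Tset S e)) from rfl,
    this, lmap_one]

lemma clip_len {S : Set (Pt m)} {e f} (h : clip S e = some f) :
    ‖f.2 - f.1‖ = (sSup (Tset S e) - sInf (Tset S e)) * ‖e.2 - e.1‖ := by
  obtain ⟨hne, hT, rfl⟩ := clip_spec h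
  have hle : sInf (Tset S e) ≤ sSup (Tset S e) := by
    obtain ⟨t, ht⟩ := hT
    exact le_trans (csInf_le Tset_bddBelow ht) (le_csSup Tset_bddAbove ht)
  have : lmap e (sSup (Tset S e)) - lmap e (sInf (Tset S e))
      = (sSup (Tset S e) - sInf (Tset S e)) • (e.2 - e.1) := by
    simp only [lmap, AffineMap.lineMap_apply, vsub_eq_sub, vadd_eq_add]
    module
  rw [show ((lmap e (sInf (Tset S e)), lmap e (sSup (Tset S e))) : Pt m × Pt m).2
      - (lmap e (sInf (Tset S e)), lmap e (sSup (Tset S e))).1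
      = lmap e (sSup (Tset S e)) - lmap e (sInf (Tset S e)) from rfl, this,
    norm_smul, Real.norm_eq_abs, abs_of_nonneg (by linarith)]


/-! ### The clipped graph -/

def swp (f : Pt m × Pt m) : Pt m × Pt m := (f.2, f.1)

@[simp] lemma swp_swp (f : Pt m × Pt m) : swp (swp f) = f := rfl

lemma swp_inj : Function.Injective (swp (m := m)) := fun a b h => by
  simp only [swp, Prod.mk.injEq] at h
  exact Prod.ext h.2 h.1

variable (S : Set (Pt m)) (G : BrGraph m)

/-- Total multiplicity clipping onto the oriented segment `f`. -/
def Dfun (f : Pt m × Pt m) : ℕ := ∑ e ∈ G.E, if clip S e = some f then G.d e else 0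

def ImgE : Finset (Pt m × Pt m) :=
  (G.E.filter fun e => (clip S e).isSome).image fun e => (clip S e).getD e

def FullE : Finset (Pt m × Pt m) := ImgE S G ∪ (ImgE S G).image swp

def Ep : Finset (Pt m × Pt m) := (ImgE S G).filter fun f => Dfun S G (swp f) < Dfun S G f

def dp (f : Pt m × Pt m) : ℕ := Dfun S G f - Dfun S G (swp f)

def Gp (Ap : Finset (Pt m)) : BrGraph m :=
  ⟨((Ep S G).image Prod.fst ∪ (Ep S G).image Prod.snd) ∪ Ap, Ep S G, dp S G⟩

lemma mem_ImgE {f : Pt m × Pt m} : f ∈ ImgE S G ↔ ∃ e ∈ G.E, clip S e = some f := by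
  constructor
  · intro hf
    obtain ⟨e, he, rfl⟩ := Finset.mem_image.1 hf
    obtain ⟨heE, hsome⟩ := Finset.mem_filter.1 he
    obtain ⟨g, hg⟩ := Option.isSome_iff_exists.1 hsome
    exact ⟨e, heE, by rw [hg, Option.getD_some]⟩
  · rintro ⟨e, he, hce⟩
    exact Finset.mem_image.2 ⟨e, Finset.mem_filter.2 ⟨he, by rw [hce]; rfl⟩,
      by rw [hce, Option.getD_some]⟩

lemma Dfun_eq_zero {f : Pt m × Pt m} (h : f ∉ ImgE S G) : Dfun S G f = 0 :=
  Finset.sum_eq_zero fun e he => if_neg fun hce => h ((mem_ImgE S G).2 ⟨e, he, hce⟩)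

lemma dp_eq_zero {f : Pt m × Pt m} (h : f ∉ Ep S G) : dp S G f = 0 := by
  by_cases hf : f ∈ ImgE S G
  · have hle : ¬ Dfun S G (swp f) < Dfun S G f :=
      fun hlt => h (Finset.mem_filter.2 ⟨hf, hlt⟩)
    unfold dp; omega
  · unfold dp; rw [Dfun_eq_zero S G hf]; omega

lemma Ep_subset_ImgE : Ep S G ⊆ ImgE S G := Finset.filter_subset _ _

lemma ImgE_subset_FullE : ImgE S G ⊆ FullE S G := Finset.subset_union_left

lemma swp_mem_FullE {f : Pt m × Pt m} (h : f ∈ FullE S G) : swp f ∈ FullE S G := by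
  rcases Finset.mem_union.1 h with h | h
  · exact Finset.mem_union_right _ (Finset.mem_image_of_mem _ h)
  · obtain ⟨g, hg, rfl⟩ := Finset.mem_image.1 h
    rw [swp_swp]
    exact Finset.mem_union_left _ hg

/-- Summing clipped multiplicities over edges out of an interior point `v`. -/
lemma sum_D_fst (hS : IsOpen S) (hGne : ∀ e ∈ G.E, e.1 ≠ e.2) {v : Pt m} (hv : v ∈ S) :
    ∑ f ∈ (FullE S G).filter (fun f => f.1 = v), Dfun S G f
      = ∑ e ∈ G.E.filter (fun e => e.1 = v), G.d e := by
  rw [Finset.sum_filter (s := G.E) (p := fun e => e.1 = v) (f := fun e => G.d e)]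
  unfold Dfun
  rw [Finset.sum_comm]
  refine Finset.sum_congr rfl fun e he => ?_
  by_cases h1 : e.1 = v
  · obtain ⟨f0, hcf0, hf01⟩ := clip_of_fst_mem (hGne e he) (h1 ▸ hv)
    rw [if_pos h1]
    refine Finset.sum_eq_single_of_mem f0
      (Finset.mem_filter.2
        ⟨ImgE_subset_FullE S G ((mem_ImgE S G).2 ⟨e, he, hcf0⟩), hf01.trans h1⟩) ?_ |>.trans ?_
    · intro f hf hne'
      exact if_neg fun hce => hne' (by rw [hcf0] at hce; exact (Option.some_inj.1 hce).symm)
    · rw [if_pos hcf0]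
  · rw [if_neg h1]
    refine Finset.sum_eq_zero fun f hf => if_neg fun hce => ?_
    have hf1 : f.1 = v := (Finset.mem_filter.1 hf).2
    exact h1 (by rw [← clip_fst_of_mem hS hce (hf1 ▸ hv), hf1])

lemma sum_D_snd (hS : IsOpen S) (hGne : ∀ e ∈ G.E, e.1 ≠ e.2) {v : Pt m} (hv : v ∈ S) :
    ∑ f ∈ (FullE S G).filter (fun f => f.2 = v), Dfun S G f
      = ∑ e ∈ G.E.filter (fun e => e.2 = v), G.d e := by
  rw [Finset.sum_filter (s := G.E) (p := fun e => e.2 = v) (f := fun e => G.d e)]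
  unfold Dfun
  rw [Finset.sum_comm]
  refine Finset.sum_congr rfl fun e he => ?_
  by_cases h1 : e.2 = v
  · obtain ⟨f0, hcf0, hf01⟩ := clip_of_snd_mem (hGne e he) (h1 ▸ hv)
    rw [if_pos h1]
    refine Finset.sum_eq_single_of_mem f0
      (Finset.mem_filter.2
        ⟨ImgE_subset_FullE S G ((mem_ImgE S G).2 ⟨e, he, hcf0⟩), hf01.trans h1⟩) ?_ |>.trans ?_
    · intro f hf hne'
      exact if_neg fun hce => hne' (by rw [hcf0] at hce; exact (Option.some_inj.1 hce).symm)
    · rw [if_pos hcf0]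
  · rw [if_neg h1]
    refine Finset.sum_eq_zero fun f hf => if_neg fun hce => ?_
    have hf1 : f.2 = v := (Finset.mem_filter.1 hf).2
    exact h1 (by rw [← clip_snd_of_mem hS hce (hf1 ▸ hv), hf1])


lemma isConn_Gp {A Aq : Finset (Pt m)} {Ω : Set (Pt m)} (hS : IsOpen S)
    (hSΩ : S ⊆ Ω) (hΩo : IsOpen Ω) (hG : G.IsConn A Ω)
    (hApA : (Aq : Set (Pt m)) = (A : Set (Pt m)) ∩ S) :
    (Gp S G Aq).IsConn Aq S := by
  obtain ⟨hAV, hVcl, hEdges, hOpp, hd1, hKir⟩ := hG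
  have hGne : ∀ e ∈ G.E, e.1 ≠ e.2 := fun e he => (hEdges e he).2.2
  have hVclS : ((Gp S G Aq).V : Set (Pt m)) ⊆ closure S := by
    intro x hx
    simp only [Gp, Finset.coe_union, Set.mem_union, Finset.mem_coe, Finset.mem_image,
      Finset.coe_image, Set.mem_image] at hx
    rcases hx with (⟨f, hf, rfl⟩ | ⟨f, hf, rfl⟩) | hx
    · obtain ⟨e, he, hce⟩ := (mem_ImgE S G).1 (Ep_subset_ImgE S G hf)
      exact clip_fst_mem_closure hce
    · obtain ⟨e, he, hce⟩ := (mem_ImgE S G).1 (Ep_subset_ImgE S G hf)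
      exact clip_snd_mem_closure hce
    · refine subset_closure ?_
      have := (Set.ext_iff.1 hApA x).1 (by exact_mod_cast hx)
      exact this.2
  refine ⟨Finset.subset_union_right, hVclS, ?_, ?_, ?_, ?_⟩
  · -- edges
    intro f hf
    have hfE : f ∈ Ep S G := hf
    obtain ⟨e, he, hce⟩ := (mem_ImgE S G).1 (Ep_subset_ImgE S G hfE)
    refine ⟨?_, ?_, clip_ne hS hce⟩
    · exact Finset.mem_union_left _ (Finset.mem_union_left _ (Finset.mem_image_of_mem _ hfE))
    · exact Finset.mem_union_left _ (Finset.mem_union_right _ (Finset.mem_image_of_mem _ hfE))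
  · -- no opposite orientation
    intro f hf hopp
    have h1 : Dfun S G (swp f) < Dfun S G f := (Finset.mem_filter.1 hf).2
    have h2 : Dfun S G (swp (f.2, f.1)) < Dfun S G (f.2, f.1) := (Finset.mem_filter.1 hopp).2
    have : swp (f.2, f.1) = f := rfl
    rw [this] at h2
    exact lt_asymm h1 h2
  · -- multiplicities ≥ 1
    intro f hf
    have h1 : Dfun S G (swp f) < Dfun S G f := (Finset.mem_filter.1 hf).2
    show 1 ≤ dp S G f
    unfold dp; omega
  · -- Kirchhoff
    intro v hvV hvfr
    have hvS : v ∈ S := by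
      have hvcl : v ∈ closure S := hVclS hvV
      by_contra hvs
      exact hvfr ⟨hvcl, by rwa [hS.interior_eq]⟩
    have hvG : v ∈ G.V := by
      simp only [Gp, Finset.mem_union, Finset.mem_image] at hvV
      rcases hvV with (⟨f, hf, rfl⟩ | ⟨f, hf, rfl⟩) | hv
      · obtain ⟨e, he, hce⟩ := (mem_ImgE S G).1 (Ep_subset_ImgE S G hf)
        rw [clip_fst_of_mem hS hce hvS]
        exact (hEdges e he).1
      · obtain ⟨e, he, hce⟩ := (mem_ImgE S G).1 (Ep_subset_ImgE S G hf)
        rw [clip_snd_of_mem hS hce hvS]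
        exact (hEdges e he).2.1
      · exact hAV (by
          have := (Set.ext_iff.1 hApA v).1 (by exact_mod_cast hv)
          exact_mod_cast this.1)
    have hvΩ : v ∉ frontier Ω := fun hfr => hfr.2 (by rw [hΩo.interior_eq]; exact hSΩ hvS)
    have hold := hKir v hvG hvΩ
    -- notation
    set Dm : Pt m × Pt m → ℕ := fun f => min (Dfun S G f) (Dfun S G (swp f)) with hDm
    have hsub1 : (Ep S G).filter (fun f => f.1 = v) ⊆ (FullE S G).filter (fun f => f.1 = v) :=
      Finset.filter_subset_filter _ ((Ep_subset_ImgE S G).trans (ImgE_subset_FullE S G))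
    have hsub2 : (Ep S G).filter (fun f => f.2 = v) ⊆ (FullE S G).filter (fun f => f.2 = v) :=
      Finset.filter_subset_filter _ ((Ep_subset_ImgE S G).trans (ImgE_subset_FullE S G))
    have K1 : ∑ f ∈ (Ep S G).filter (fun f => f.1 = v), dp S G f
        = ∑ f ∈ (FullE S G).filter (fun f => f.1 = v), dp S G f := by
      refine Finset.sum_subset hsub1 fun f hf hnf => ?_
      refine dp_eq_zero S G fun hfE => hnf (Finset.mem_filter.2 ⟨hfE, (Finset.mem_filter.1 hf).2⟩)
    have K1' : ∑ f ∈ (Ep S G).filter (fun f => f.2 = v), dp S G f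
        = ∑ f ∈ (FullE S G).filter (fun f => f.2 = v), dp S G f := by
      refine Finset.sum_subset hsub2 fun f hf hnf => ?_
      refine dp_eq_zero S G fun hfE => hnf (Finset.mem_filter.2 ⟨hfE, (Finset.mem_filter.1 hf).2⟩)
    have K2 : ∑ f ∈ (FullE S G).filter (fun f => f.1 = v), dp S G f
        + ∑ f ∈ (FullE S G).filter (fun f => f.1 = v), Dm f
        = ∑ f ∈ (FullE S G).filter (fun f => f.1 = v), Dfun S G f := by
      rw [← Finset.sum_add_distrib]
      exact Finset.sum_congr rfl fun f _ => by unfold dp; simp only [hDm]; omega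
    have K2' : ∑ f ∈ (FullE S G).filter (fun f => f.2 = v), dp S G f
        + ∑ f ∈ (FullE S G).filter (fun f => f.2 = v), Dm f
        = ∑ f ∈ (FullE S G).filter (fun f => f.2 = v), Dfun S G f := by
      rw [← Finset.sum_add_distrib]
      exact Finset.sum_congr rfl fun f _ => by unfold dp; simp only [hDm]; omega
    have himg : ((FullE S G).filter (fun f => f.2 = v)).image swp
        = (FullE S G).filter (fun f => f.1 = v) := by
      ext f
      simp only [Finset.mem_image, Finset.mem_filter]
      constructor
      · rintro ⟨g, ⟨hgF, hg2⟩, rfl⟩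
        exact ⟨swp_mem_FullE S G hgF, hg2⟩
      · rintro ⟨hfF, hf1⟩
        exact ⟨swp f, ⟨swp_mem_FullE S G hfF, hf1⟩, swp_swp f⟩
    have KM : ∑ f ∈ (FullE S G).filter (fun f => f.1 = v), Dm f
        = ∑ f ∈ (FullE S G).filter (fun f => f.2 = v), Dm f := by
      rw [← himg, Finset.sum_image (fun a _ b _ h => swp_inj h)]
      exact Finset.sum_congr rfl fun f _ => by simp only [hDm, swp_swp]; exact min_comm _ _
    have hind : (if v ∈ Aq then 1 else 0) = (if v ∈ A then (1:ℕ) else 0) := by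
      have hiff := Set.ext_iff.1 hApA v
      simp only [Set.mem_inter_iff, Finset.mem_coe] at hiff
      by_cases hv : v ∈ A
      · rw [if_pos hv, if_pos (hiff.2 ⟨hv, hvS⟩)]
      · rw [if_neg hv, if_neg (fun hvq => hv (hiff.1 hvq).1)]
    have hout := sum_D_fst S G hS hGne hvS
    have hin := sum_D_snd S G hS hGne hvS
    show ∑ f ∈ (Ep S G).filter (fun f => f.1 = v), dp S G f
        = ∑ f ∈ (Ep S G).filter (fun f => f.2 = v), dp S G f + (if v ∈ Aq then 1 else 0)
    rw [hind, K1, K1']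
    omega


/-! ### Cost estimates -/

lemma sInf_Tset_le_sSup {S : Set (Pt m)} {e} (hne : (Tset S e).Nonempty) :
    sInf (Tset S e) ≤ sSup (Tset S e) := by
  obtain ⟨t, ht⟩ := hne
  exact le_trans (csInf_le Tset_bddBelow ht) (le_csSup Tset_bddAbove ht)

lemma rpow_add_le {x y : ℝ} (hx : 0 ≤ x) (hy : 0 ≤ y) {α : ℝ} (h0 : 0 ≤ α) (h1 : α ≤ 1) :
    (x + y) ^ α ≤ x ^ α + y ^ α := by
  have h := NNReal.rpow_add_le_add_rpow x.toNNReal y.toNNReal h0 h1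
  have h2 := NNReal.coe_le_coe.2 h
  rwa [NNReal.coe_rpow, NNReal.coe_add, NNReal.coe_add, NNReal.coe_rpow, NNReal.coe_rpow,
    Real.coe_toNNReal x hx, Real.coe_toNNReal y hy] at h2

lemma sum_rpow_le {β : Type*} (s : Finset β) (a : β → ℝ) (ha : ∀ i ∈ s, 0 ≤ a i)
    {α : ℝ} (h0 : 0 < α) (h1 : α ≤ 1) :
    (∑ i ∈ s, a i) ^ α ≤ ∑ i ∈ s, a i ^ α := by
  induction s using Finset.cons_induction with
  | empty => simp [Real.zero_rpow h0.ne']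
  | cons i s his ih =>
    rw [Finset.sum_cons, Finset.sum_cons]
    have hs : 0 ≤ ∑ j ∈ s, a j :=
      Finset.sum_nonneg fun j hj => ha j (Finset.mem_cons_of_mem hj)
    calc (a i + ∑ j ∈ s, a j) ^ α
        ≤ a i ^ α + (∑ j ∈ s, a j) ^ α :=
          rpow_add_le (ha i (Finset.mem_cons_self _ _)) hs h0.le h1
      _ ≤ a i ^ α + ∑ j ∈ s, a j ^ α :=
          add_le_add le_rfl (ih fun j hj => ha j (Finset.mem_cons_of_mem hj))

/-- The length of the clipped edge. -/
def cliplen (e : Pt m × Pt m) : ℝ := ((clip S e).map fun f => ‖f.2 - f.1‖).getD 0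

lemma cost_Gp_le {α : ℝ} (hα0 : 0 < α) (hα1 : α ≤ 1) (Aq : Finset (Pt m)) :
    (Gp S G Aq).cost α ≤ ∑ e ∈ G.E, (G.d e : ℝ) ^ α * cliplen S e := by
  have step1 : (Gp S G Aq).cost α ≤ ∑ f ∈ ImgE S G, (Dfun S G f : ℝ) ^ α * ‖f.2 - f.1‖ := by
    refine le_trans (Finset.sum_le_sum fun f (hf : f ∈ Ep S G) => ?_)
      (Finset.sum_le_sum_of_subset_of_nonneg (Ep_subset_ImgE S G) fun f _ _ =>
        mul_nonneg (Real.rpow_nonneg (Nat.cast_nonneg _) _) (norm_nonneg _))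
    exact mul_le_mul_of_nonneg_right
      (Real.rpow_le_rpow (Nat.cast_nonneg _) (Nat.cast_le.2 (Nat.sub_le _ _)) hα0.le)
      (norm_nonneg _)
  have step2 : ∑ f ∈ ImgE S G, (Dfun S G f : ℝ) ^ α * ‖f.2 - f.1‖
      ≤ ∑ f ∈ ImgE S G, ∑ e ∈ G.E,
          (if clip S e = some f then (G.d e : ℝ) ^ α * ‖f.2 - f.1‖ else 0) := by
    refine Finset.sum_le_sum fun f _ => ?_
    have hD : (Dfun S G f : ℝ) = ∑ e ∈ G.E, (if clip S e = some f then (G.d e : ℝ) else 0) := by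
      unfold Dfun
      push_cast
      exact Finset.sum_congr rfl fun e _ => by split_ifs <;> simp
    have h2 : (Dfun S G f : ℝ) ^ α
        ≤ ∑ e ∈ G.E, (if clip S e = some f then (G.d e : ℝ) ^ α else 0) := by
      rw [hD]
      refine le_trans (sum_rpow_le _ _ (fun e _ => by positivity) hα0 hα1) ?_
      refine le_of_eq (Finset.sum_congr rfl fun e _ => ?_)
      split_ifs <;> simp [Real.zero_rpow hα0.ne']
    calc (Dfun S G f : ℝ) ^ α * ‖f.2 - f.1‖
        ≤ (∑ e ∈ G.E, (if clip S e = some f then (G.d e : ℝ) ^ α else 0)) * ‖f.2 - f.1‖ :=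
          mul_le_mul_of_nonneg_right h2 (norm_nonneg _)
      _ = _ := by
          rw [Finset.sum_mul]
          exact Finset.sum_congr rfl fun e _ => by split_ifs <;> simp
  have step3 : ∑ f ∈ ImgE S G, ∑ e ∈ G.E,
        (if clip S e = some f then (G.d e : ℝ) ^ α * ‖f.2 - f.1‖ else 0)
      = ∑ e ∈ G.E, (G.d e : ℝ) ^ α * cliplen S e := by
    rw [Finset.sum_comm]
    refine Finset.sum_congr rfl fun e he => ?_
    cases hce : clip S e with
    | none => simp [cliplen, hce]
    | some f0 =>
      have hf0 : f0 ∈ ImgE S G := (mem_ImgE S G).2 ⟨e, he, hce⟩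
      rw [Finset.sum_eq_single_of_mem f0 hf0 (fun f hf hne => if_neg fun h =>
        hne (Option.some_inj.1 h).symm), if_pos rfl]
      simp [cliplen, hce]
  exact step1.trans (step2.trans (le_of_eq step3))

lemma sum_cliplen_le {ι : Type} [Fintype ι] (Ωp : ι → Set (Pt m))
    (hconv : ∀ p, Convex ℝ (Ωp p))
    (hdisj : ∀ p q, p ≠ q → Disjoint (Ωp p) (Ωp q)) (e : Pt m × Pt m) :
    ∑ p, cliplen (Ωp p) e ≤ ‖e.2 - e.1‖ := by
  set s : Finset ι := Finset.univ.filter fun p => (clip (Ωp p) e).isSome with hs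
  have hTne : ∀ p ∈ s, (Tset (Ωp p) e).Nonempty := by
    intro p hp
    obtain ⟨f, hf⟩ := Option.isSome_iff_exists.1 (Finset.mem_filter.1 hp).2
    exact (clip_spec hf).2.1
  have h1 : ∑ p, cliplen (Ωp p) e = ∑ p ∈ s, cliplen (Ωp p) e := by
    refine (Finset.sum_subset (Finset.subset_univ s) fun p _ hp => ?_).symm
    cases hce : clip (Ωp p) e with
    | none => simp [cliplen, hce]
    | some f => exact absurd (Finset.mem_filter.2 ⟨Finset.mem_univ p, by rw [hce]; rfl⟩) hp
  have key : ∑ p ∈ s, (sSup (Tset (Ωp p) e) - sInf (Tset (Ωp p) e)) ≤ 1 := by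
    have hdisj' : (↑s : Set ι).PairwiseDisjoint
        fun p => Set.Ioo (sInf (Tset (Ωp p) e)) (sSup (Tset (Ωp p) e)) := by
      intro p _ q _ hpq
      refine Set.disjoint_left.2 fun t htp htq => ?_
      exact Set.disjoint_left.1 (hdisj p q hpq)
        (Ioo_subset_Tset (hconv p) htp).2 (Ioo_subset_Tset (hconv q) htq).2
    have hmeas := MeasureTheory.measure_biUnion_finset hdisj'
      (fun p _ => measurableSet_Ioo) (μ := MeasureTheory.volume)
    have hsub : (⋃ p ∈ s, Set.Ioo (sInf (Tset (Ωp p) e)) (sSup (Tset (Ωp p) e)))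
        ⊆ Set.Icc (0:ℝ) 1 := by
      intro t ht
      simp only [Set.mem_iUnion] at ht
      obtain ⟨p, hp, htp⟩ := ht
      exact ⟨le_trans (sInf_Tset_mem_Icc (hTne p hp)).1 htp.1.le,
        le_trans htp.2.le (sSup_Tset_mem_Icc (hTne p hp)).2⟩
    have hle : ∑ p ∈ s, MeasureTheory.volume
        (Set.Ioo (sInf (Tset (Ωp p) e)) (sSup (Tset (Ωp p) e))) ≤ 1 := by
      rw [← hmeas]
      calc MeasureTheory.volume (⋃ p ∈ s, Set.Ioo (sInf (Tset (Ωp p) e)) (sSup (Tset (Ωp p) e)))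
          ≤ MeasureTheory.volume (Set.Icc (0:ℝ) 1) := MeasureTheory.measure_mono hsub
        _ = 1 := by rw [Real.volume_Icc]; norm_num
    have h2 : ∑ p ∈ s, ENNReal.ofReal (sSup (Tset (Ωp p) e) - sInf (Tset (Ωp p) e)) ≤ 1 := by
      simpa [Real.volume_Ioo] using hle
    rw [← ENNReal.ofReal_sum_of_nonneg
      (fun p hp => sub_nonneg.2 (sInf_Tset_le_sSup (hTne p hp)))] at h2
    exact ENNReal.ofReal_le_one.1 h2
  rw [h1]
  have h2 : ∑ p ∈ s, cliplen (Ωp p) e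
      = (∑ p ∈ s, (sSup (Tset (Ωp p) e) - sInf (Tset (Ωp p) e))) * ‖e.2 - e.1‖ := by
    rw [Finset.sum_mul]
    refine Finset.sum_congr rfl fun p hp => ?_
    obtain ⟨f, hf⟩ := Option.isSome_iff_exists.1 (Finset.mem_filter.1 hp).2
    rw [show cliplen (Ωp p) e = ‖f.2 - f.1‖ by simp [cliplen, hf], clip_len hf]
  rw [h2]
  exact mul_le_of_le_one_left (norm_nonneg _) key

end Stmt5

/-- If `(Ω_p)_{p∈P}` is a finite family of pairwise disjoint open convex subsets of a
bounded open set `Ω ⊆ ℝ^m` and `A ⊆ Ω` is finite with `A ∩ ∂Ω_p = ∅` for every `p`, then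
`ℒ^α_brbd(A, ∂Ω) ≥ Σ_p ℒ^α_brbd(A ∩ Ω_p, ∂Ω_p)`. -/
theorem statement5 (m : ℕ) (α : ℝ) (hα0 : 0 < α) (hα1 : α ≤ 1)
    (Ω : Set (Pt m)) (hΩo : IsOpen Ω) (hΩb : Bornology.IsBounded Ω)
    (ι : Type) [Fintype ι] (Ωp : ι → Set (Pt m))
    (hsub : ∀ p, Ωp p ⊆ Ω) (hopen : ∀ p, IsOpen (Ωp p)) (hconv : ∀ p, Convex ℝ (Ωp p))
    (hdisj : ∀ p q, p ≠ q → Disjoint (Ωp p) (Ωp q))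
    (A : Finset (Pt m)) (hA : (A : Set (Pt m)) ⊆ Ω)
    (hAfr : ∀ p, (A : Set (Pt m)) ∩ frontier (Ωp p) = ∅)
    (Ap : ι → Finset (Pt m)) (hAp : ∀ p, (Ap p : Set (Pt m)) = (A : Set (Pt m)) ∩ Ωp p) :
    ∑ p, Lbrbd m α (Ap p) (Ωp p) ≤ Lbrbd m α A Ω := by
  refine le_iInf fun G => le_iInf fun hG => ?_
  have key : ∀ p, Lbrbd m α (Ap p) (Ωp p)
      ≤ ENNReal.ofReal ((Stmt5.Gp (Ωp p) G (Ap p)).cost α) := fun p =>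
    iInf₂_le (Stmt5.Gp (Ωp p) G (Ap p))
      (Stmt5.isConn_Gp (Ωp p) G (hopen p) (hsub p) hΩo hG (hAp p))
  have hfinal : ∑ p, (Stmt5.Gp (Ωp p) G (Ap p)).cost α ≤ G.cost α := by
    calc ∑ p, (Stmt5.Gp (Ωp p) G (Ap p)).cost α
        ≤ ∑ p, ∑ e ∈ G.E, (G.d e : ℝ) ^ α * Stmt5.cliplen (Ωp p) e :=
          Finset.sum_le_sum fun p _ => Stmt5.cost_Gp_le (Ωp p) G hα0 hα1 (Ap p)
      _ = ∑ e ∈ G.E, (G.d e : ℝ) ^ α * ∑ p, Stmt5.cliplen (Ωp p) e := by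
          rw [Finset.sum_comm]
          exact Finset.sum_congr rfl fun e _ => by rw [Finset.mul_sum]
      _ ≤ ∑ e ∈ G.E, (G.d e : ℝ) ^ α * ‖e.2 - e.1‖ :=
          Finset.sum_le_sum fun e _ => mul_le_mul_of_nonneg_left
            (Stmt5.sum_cliplen_le Ωp hconv hdisj e) (by positivity)
      _ = G.cost α := rfl
  calc ∑ p, Lbrbd m α (Ap p) (Ωp p)
      ≤ ∑ p, ENNReal.ofReal ((Stmt5.Gp (Ωp p) G (Ap p)).cost α) :=
        Finset.sum_le_sum fun p _ => key p
    _ = ENNReal.ofReal (∑ p, (Stmt5.Gp (Ωp p) G (Ap p)).cost α) :=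
        (ENNReal.ofReal_sum_of_nonneg fun p _ =>
          Finset.sum_nonneg fun f _ => by positivity).symm
    _ ≤ ENNReal.ofReal (G.cost α) := ENNReal.ofReal_le_ofReal hfinal


end
end

section
/- Let Ω ⊆ ℝ^m be a bounded open set, A ⊆ Ω a finite set, and G ∈ 𝒢(A, ∂Ω) with multiplicity function d_G. Then for each a ∈ A there exists a finite sequence of distinct points a = b₁^a, b₂^a, …, b_{q_a}^a with b_{q_a}^a ∈ ∂Ω and [b_i^a, b_{i+1}^a] ∈ E(G) for every i, and there exists a weighted graph T₀ ∈ 𝒢(∅, ∂Ω) with E(T₀) ⊆ E(G), such that for every edge e ∈ E(G): d_G(e) = d_{T₀}(e) + #{ a ∈ A : e = [b_i^a, b_{i+1}^a] for some i }, where d_{T₀}(e) is set to 0 when e ∉ E(T₀). -/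
open scoped ENNReal
open scoped Classical

noncomputable section

lemma reach_frontier {m : ℕ} {Ω : Set (Pt m)} {A : Finset (Pt m)} {G : BrGraph m}
    (hG : G.IsConn A Ω) {a : Pt m} (ha : a ∈ A) :
    ∃ v, Relation.ReflTransGen (fun x y => (x, y) ∈ G.E) a v ∧ v ∈ frontier Ω := by
  by_contra hcon
  push_neg at hcon
  obtain ⟨hAV, hVΩ, hEnd, hOr, hd1, hbal⟩ := hG
  set R := fun x y => (x, y) ∈ G.E with hR
  set S := G.V.filter (fun v => Relation.ReflTransGen R a v) with hS
  have haS : a ∈ S := Finset.mem_filter.2 ⟨hAV ha, Relation.ReflTransGen.refl⟩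
  have hclosed : ∀ e ∈ G.E, e.1 ∈ S → e.2 ∈ S := by
    intro e he h1
    exact Finset.mem_filter.2 ⟨(hEnd e he).2.1,
      (Finset.mem_filter.1 h1).2.tail he⟩
  have key : ∀ v ∈ S,
      (∑ e ∈ G.E.filter (fun e => e.1 = v), G.d e) =
        (∑ e ∈ G.E.filter (fun e => e.2 = v), G.d e) + (if v ∈ A then 1 else 0) := by
    intro v hv
    have hv' := Finset.mem_filter.1 hv
    exact hbal v hv'.1 (hcon v hv'.2)
  have L : ∑ v ∈ S, ∑ e ∈ G.E.filter (fun e => e.1 = v), G.d e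
      = ∑ e ∈ G.E.filter (fun e => e.1 ∈ S), G.d e :=
    Finset.sum_fiberwise_eq_sum_filter G.E S (fun e => e.1) (fun e => G.d e)
  have Rin : ∑ v ∈ S, ∑ e ∈ G.E.filter (fun e => e.2 = v), G.d e
      = ∑ e ∈ G.E.filter (fun e => e.2 ∈ S), G.d e :=
    Finset.sum_fiberwise_eq_sum_filter G.E S (fun e => e.2) (fun e => G.d e)
  have hsumkey : ∑ v ∈ S, ∑ e ∈ G.E.filter (fun e => e.1 = v), G.d e
      = ∑ v ∈ S, ((∑ e ∈ G.E.filter (fun e => e.2 = v), G.d e) + (if v ∈ A then 1 else 0)) :=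
    Finset.sum_congr rfl key
  rw [Finset.sum_add_distrib] at hsumkey
  have hone : 1 ≤ ∑ v ∈ S, (if v ∈ A then 1 else 0) := by
    have := Finset.single_le_sum (f := fun v => if v ∈ A then 1 else 0)
      (fun i _ => Nat.zero_le _) haS
    simpa [ha] using this
  have hsub : G.E.filter (fun e => e.1 ∈ S) ⊆ G.E.filter (fun e => e.2 ∈ S) := by
    intro e he
    have he' := Finset.mem_filter.1 he
    exact Finset.mem_filter.2 ⟨he'.1, hclosed e he'.1 he'.2⟩
  have hle : ∑ e ∈ G.E.filter (fun e => e.1 ∈ S), G.d e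
      ≤ ∑ e ∈ G.E.filter (fun e => e.2 ∈ S), G.d e :=
    Finset.sum_le_sum_of_subset hsub
  omega

lemma walk_of_reach {m : ℕ} {E : Finset (Pt m × Pt m)} {a v : Pt m}
    (h : Relation.ReflTransGen (fun x y => (x, y) ∈ E) a v) :
    ∃ (n : ℕ) (b : ℕ → Pt m), b 0 = a ∧ b n = v ∧ ∀ i < n, (b i, b (i + 1)) ∈ E := by
  induction h with
  | refl => exact ⟨0, fun _ => a, rfl, rfl, by omega⟩
  | @tail c v' hac hcv ih =>
    obtain ⟨n, b, hb0, hbn, hbE⟩ := ih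
    refine ⟨n + 1, fun i => if i ≤ n then b i else v', by simp [hb0], by simp, ?_⟩
    intro i hi
    by_cases h1 : i < n
    · simp only [show i ≤ n by omega, if_pos, show i + 1 ≤ n by omega]
      simpa using hbE i h1
    · have hin : i = n := by omega
      simp only [hin, le_refl, if_pos, show ¬ (n + 1 ≤ n) by omega, if_neg,
        not_false_iff]
      simpa [hbn] using hcv

lemma dedup_walk {m : ℕ} {E : Finset (Pt m × Pt m)} {F : Set (Pt m)} :
    ∀ (n : ℕ) (b : ℕ → Pt m), b n ∈ F → (∀ i < n, (b i, b (i + 1)) ∈ E) →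
    ∃ (n' : ℕ) (b' : ℕ → Pt m), b' 0 = b 0 ∧ b' n' ∈ F ∧
      (∀ i < n', (b' i, b' (i + 1)) ∈ E) ∧
      (∀ i ≤ n', ∀ j ≤ n', b' i = b' j → i = j) := by
  intro n
  induction n using Nat.strong_induction_on with
  | _ n ih =>
    intro b hF hE
    by_cases hdup : ∃ i j, i < j ∧ j ≤ n ∧ b i = b j
    · obtain ⟨i, j, hij, hjn, hb⟩ := hdup
      set Δ := j - i with hΔ
      have hΔ1 : 1 ≤ Δ := by omega
      set b2 : ℕ → Pt m := fun k => if k ≤ i then b k else b (k + Δ) with hb2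
      have hlt : n - Δ < n := by omega
      have hF2 : b2 (n - Δ) ∈ F := by
        by_cases hni : n - Δ ≤ i
        · have hni' : n = j := by omega
          have : n - Δ = i := by omega
          simp only [hb2, this, le_refl, if_pos]
          rw [hb, ← hni']; exact hF
        · simp only [hb2, if_neg hni]
          rw [show n - Δ + Δ = n by omega]; exact hF
      have hE2 : ∀ k < n - Δ, (b2 k, b2 (k + 1)) ∈ E := by
        intro k hk
        rcases lt_trichotomy k i with h1 | h1 | h1
        · simp only [hb2, show k ≤ i by omega, if_pos, show k + 1 ≤ i by omega]
          exact hE k (by omega)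
        · subst h1
          simp only [hb2, le_refl, if_pos, show ¬ (k + 1 ≤ k) by omega, if_neg,
            not_false_iff]
          rw [show k + 1 + Δ = j + 1 by omega, hb]
          exact hE j (by omega)
        · simp only [hb2, show ¬ (k ≤ i) by omega, show ¬ (k + 1 ≤ i) by omega, if_neg,
            not_false_iff]
          have := hE (k + Δ) (by omega)
          rwa [show k + Δ + 1 = k + 1 + Δ by omega] at this
      obtain ⟨n', b', h0, hf, he, hi⟩ := ih (n - Δ) hlt b2 hF2 hE2
      exact ⟨n', b', by rw [h0]; simp [hb2], hf, he, hi⟩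
    · push_neg at hdup
      refine ⟨n, b, rfl, hF, hE, ?_⟩
      intro i hi j hj hbij
      rcases lt_trichotomy i j with h | h | h
      · exact absurd hbij (hdup i j h hj)
      · exact h
      · exact absurd hbij.symm (hdup j i h hi)

def pmul {m : ℕ} (bp : ℕ → Pt m) (n : ℕ) (e : Pt m × Pt m) : ℕ :=
  ((Finset.range n).filter (fun i => (bp i, bp (i + 1)) = e)).card

def decG {m : ℕ} (G : BrGraph m) (bp : ℕ → Pt m) (n : ℕ) : BrGraph m where
  V := G.V
  E := G.E.filter (fun e => 1 ≤ G.d e - pmul bp n e)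
  d := fun e => G.d e - pmul bp n e

lemma decG_V {m : ℕ} (G : BrGraph m) (bp : ℕ → Pt m) (n : ℕ) :
    (decG G bp n).V = G.V := rfl

lemma decG_E {m : ℕ} (G : BrGraph m) (bp : ℕ → Pt m) (n : ℕ) :
    (decG G bp n).E = G.E.filter (fun e => 1 ≤ G.d e - pmul bp n e) := rfl

lemma decG_d {m : ℕ} (G : BrGraph m) (bp : ℕ → Pt m) (n : ℕ) (e : Pt m × Pt m) :
    (decG G bp n).d e = G.d e - pmul bp n e := rfl

section dec
variable {m : ℕ} {Ω : Set (Pt m)} {A : Finset (Pt m)} {G : BrGraph m} {a : Pt m}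
  {n : ℕ} {bp : ℕ → Pt m}

lemma pmul_le_one (hinj : ∀ i ≤ n, ∀ j ≤ n, bp i = bp j → i = j) (e : Pt m × Pt m) :
    pmul bp n e ≤ 1 := by
  apply Finset.card_le_one.2
  intro x hx y hy
  obtain ⟨hx1, hx2⟩ := Finset.mem_filter.1 hx
  obtain ⟨hy1, hy2⟩ := Finset.mem_filter.1 hy
  have : bp x = bp y := by
    have := hx2.trans hy2.symm
    exact (Prod.mk.injEq _ _ _ _ ▸ this).1
  exact hinj x (le_of_lt (Finset.mem_range.1 hx1)) y (le_of_lt (Finset.mem_range.1 hy1)) this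

lemma pmul_eq_one_iff (hinj : ∀ i ≤ n, ∀ j ≤ n, bp i = bp j → i = j) (e : Pt m × Pt m) :
    pmul bp n e = 1 ↔ ∃ i < n, e = (bp i, bp (i + 1)) := by
  constructor
  · intro h
    have hpos : 0 < ((Finset.range n).filter (fun i => (bp i, bp (i + 1)) = e)).card := by
      have : pmul bp n e = ((Finset.range n).filter (fun i => (bp i, bp (i + 1)) = e)).card := rfl
      omega
    obtain ⟨i, hi⟩ := Finset.card_pos.1 hpos
    obtain ⟨hi1, hi2⟩ := Finset.mem_filter.1 hi
    exact ⟨i, Finset.mem_range.1 hi1, hi2.symm⟩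
  · intro ⟨i, hi, he⟩
    have h1 : 1 ≤ pmul bp n e := by
      apply Finset.card_pos.2
      exact ⟨i, Finset.mem_filter.2 ⟨Finset.mem_range.2 hi, he.symm⟩⟩
    have := pmul_le_one hinj e
    omega

lemma sum_pmul_out (hE : ∀ i < n, (bp i, bp (i + 1)) ∈ G.E) (v : Pt m) :
    ∑ e ∈ G.E.filter (fun e => e.1 = v), pmul bp n e
      = ((Finset.range n).filter (fun i => bp i = v)).card := by
  have h1 := Finset.sum_card_fiberwise_eq_card_filter (Finset.range n)
    (G.E.filter (fun e => e.1 = v)) (fun i => (bp i, bp (i + 1)))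
  rw [show (∑ e ∈ G.E.filter (fun e => e.1 = v), pmul bp n e)
      = ∑ j ∈ G.E.filter (fun e => e.1 = v),
        ((Finset.range n).filter (fun i => (bp i, bp (i + 1)) = j)).card from rfl, h1]
  congr 1
  apply Finset.filter_congr
  intro i hi
  have hi' := Finset.mem_range.1 hi
  simp only [Finset.mem_filter, hE i hi', true_and]

lemma sum_pmul_in (hE : ∀ i < n, (bp i, bp (i + 1)) ∈ G.E) (v : Pt m) :
    ∑ e ∈ G.E.filter (fun e => e.2 = v), pmul bp n e
      = ((Finset.range n).filter (fun i => bp (i + 1) = v)).card := by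
  have h1 := Finset.sum_card_fiberwise_eq_card_filter (Finset.range n)
    (G.E.filter (fun e => e.2 = v)) (fun i => (bp i, bp (i + 1)))
  rw [show (∑ e ∈ G.E.filter (fun e => e.2 = v), pmul bp n e)
      = ∑ j ∈ G.E.filter (fun e => e.2 = v),
        ((Finset.range n).filter (fun i => (bp i, bp (i + 1)) = j)).card from rfl, h1]
  congr 1
  apply Finset.filter_congr
  intro i hi
  have hi' := Finset.mem_range.1 hi
  simp only [Finset.mem_filter, hE i hi', true_and]

lemma decrement (hG : G.IsConn A Ω) (ha : a ∈ A)
    (hn : 1 ≤ n) (h0 : bp 0 = a) (hfr : bp n ∈ frontier Ω)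
    (hE : ∀ i < n, (bp i, bp (i + 1)) ∈ G.E)
    (hinj : ∀ i ≤ n, ∀ j ≤ n, bp i = bp j → i = j) :
    (decG G bp n).IsConn (A.erase a) Ω := by
  obtain ⟨hAV, hVΩ, hEnd, hOr, hd1, hbal⟩ := hG
  have hsub : (decG G bp n).E ⊆ G.E := Finset.filter_subset _ _
  have hple : ∀ e ∈ G.E, pmul bp n e ≤ G.d e :=
    fun e he => le_trans (pmul_le_one hinj e) (hd1 e he)
  refine ⟨fun x hx => hAV (Finset.mem_of_mem_erase hx), hVΩ,
    fun e he => hEnd e (hsub he), fun e he hc => hOr e (hsub he) (hsub hc),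
    fun e he => (Finset.mem_filter.1 he).2, ?_⟩
  intro v hv hvf
  have hout : ∑ e ∈ (decG G bp n).E.filter (fun e => e.1 = v), (decG G bp n).d e
      = (∑ e ∈ G.E.filter (fun e => e.1 = v), G.d e)
        - ((Finset.range n).filter (fun i => bp i = v)).card := by
    rw [decG_E, Finset.filter_comm]
    simp only [decG_d]
    rw [Finset.sum_filter_of_ne (f := fun e => G.d e - pmul bp n e)
      (fun e _ h => Nat.one_le_iff_ne_zero.2 h)]
    rw [Finset.sum_tsub_distrib _ (fun e he => hple e (Finset.mem_filter.1 he).1),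
      sum_pmul_out hE]
  have hin : ∑ e ∈ (decG G bp n).E.filter (fun e => e.2 = v), (decG G bp n).d e
      = (∑ e ∈ G.E.filter (fun e => e.2 = v), G.d e)
        - ((Finset.range n).filter (fun i => bp (i + 1) = v)).card := by
    rw [decG_E, Finset.filter_comm]
    simp only [decG_d]
    rw [Finset.sum_filter_of_ne (f := fun e => G.d e - pmul bp n e)
      (fun e _ h => Nat.one_le_iff_ne_zero.2 h)]
    rw [Finset.sum_tsub_distrib _ (fun e he => hple e (Finset.mem_filter.1 he).1),
      sum_pmul_in hE]
  have hcout_le : ((Finset.range n).filter (fun i => bp i = v)).card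
      ≤ ∑ e ∈ G.E.filter (fun e => e.1 = v), G.d e := by
    rw [← sum_pmul_out hE]
    exact Finset.sum_le_sum (fun e he => hple e (Finset.mem_filter.1 he).1)
  have hcin_le : ((Finset.range n).filter (fun i => bp (i + 1) = v)).card
      ≤ ∑ e ∈ G.E.filter (fun e => e.2 = v), G.d e := by
    rw [← sum_pmul_in hE]
    exact Finset.sum_le_sum (fun e he => hple e (Finset.mem_filter.1 he).1)
  have hbalv := hbal v hv hvf
  rw [hout, hin]
  by_cases hva : v = a
  · have hc1 : ((Finset.range n).filter (fun i => bp i = v)).card = 1 := by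
      rw [Finset.card_eq_one]
      refine ⟨0, ?_⟩
      ext i
      simp only [Finset.mem_filter, Finset.mem_range, Finset.mem_singleton]
      constructor
      · intro ⟨hi, hbi⟩
        exact hinj i (le_of_lt hi) 0 (Nat.zero_le n) (by rw [hbi, hva, ← h0])
      · intro h; subst h; exact ⟨hn, by rw [h0, hva]⟩
    have hc2 : ((Finset.range n).filter (fun i => bp (i + 1) = v)).card = 0 := by
      rw [Finset.card_eq_zero, Finset.filter_eq_empty_iff]
      intro i hi hbi
      have := hinj (i + 1) (Finset.mem_range.1 hi) 0 (Nat.zero_le n)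
        (by rw [hbi, hva, ← h0])
      omega
    have hvA : (if v ∈ A then 1 else 0) = 1 := by simp [hva, ha]
    have hvA' : (if v ∈ A.erase a then 1 else 0) = 0 := by simp [hva]
    rw [hc1, hc2, hvA']
    rw [hvA] at hbalv
    omega
  · have hvn : v ≠ bp n := fun h => hvf (h ▸ hfr)
    have hle1 : ((Finset.range n).filter (fun i => bp i = v)).card ≤ 1 := by
      apply Finset.card_le_one.2
      intro x hx y hy
      obtain ⟨hx1, hx2⟩ := Finset.mem_filter.1 hx
      obtain ⟨hy1, hy2⟩ := Finset.mem_filter.1 hy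
      exact hinj x (le_of_lt (Finset.mem_range.1 hx1)) y
        (le_of_lt (Finset.mem_range.1 hy1)) (hx2.trans hy2.symm)
    have hle2 : ((Finset.range n).filter (fun i => bp (i + 1) = v)).card ≤ 1 := by
      apply Finset.card_le_one.2
      intro x hx y hy
      obtain ⟨hx1, hx2⟩ := Finset.mem_filter.1 hx
      obtain ⟨hy1, hy2⟩ := Finset.mem_filter.1 hy
      have := hinj (x + 1) (Finset.mem_range.1 hx1) (y + 1)
        (Finset.mem_range.1 hy1) (hx2.trans hy2.symm)
      omega
    have hiff : (0 < ((Finset.range n).filter (fun i => bp i = v)).card)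
        ↔ (0 < ((Finset.range n).filter (fun i => bp (i + 1) = v)).card) := by
      rw [Finset.card_pos, Finset.card_pos, Finset.filter_nonempty_iff,
        Finset.filter_nonempty_iff]
      constructor
      · intro ⟨i, hi, hbi⟩
        have hi' := Finset.mem_range.1 hi
        have hi0 : i ≠ 0 := by
          intro h; exact hva (by rw [← hbi, h]; exact h0)
        exact ⟨i - 1, Finset.mem_range.2 (by omega),
          by rw [show i - 1 + 1 = i by omega]; exact hbi⟩
      · intro ⟨i, hi, hbi⟩
        have hi' := Finset.mem_range.1 hi
        have hin' : i + 1 ≠ n := by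
          intro h; exact hvn (by rw [← hbi, h])
        exact ⟨i + 1, Finset.mem_range.2 (by omega), hbi⟩
    have hvAA : (if v ∈ A.erase a then 1 else 0) = (if v ∈ A then 1 else 0) := by
      simp [Finset.mem_erase, hva]
    rw [hvAA]
    omega

lemma dec_identity (hG : G.IsConn A Ω)
    (hinj : ∀ i ≤ n, ∀ j ≤ n, bp i = bp j → i = j) :
    ∀ e ∈ G.E, G.d e
      = (if e ∈ (decG G bp n).E then (decG G bp n).d e else 0) + pmul bp n e := by
  intro e he
  have hd1 : 1 ≤ G.d e := hG.2.2.2.2.1 e he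
  have hp1 : pmul bp n e ≤ 1 := pmul_le_one hinj e
  by_cases hmem : e ∈ (decG G bp n).E
  · rw [decG_E] at hmem
    have h1 : 1 ≤ G.d e - pmul bp n e := (Finset.mem_filter.1 hmem).2
    rw [if_pos (by rw [decG_E]; exact hmem), decG_d]
    omega
  · have h1 : ¬ (1 ≤ G.d e - pmul bp n e) := by
      intro h
      exact hmem (by rw [decG_E]; exact Finset.mem_filter.2 ⟨he, h⟩)
    rw [if_neg hmem]
    omega

end dec


lemma main_aux {m : ℕ} {Ω : Set (Pt m)} (hΩo : IsOpen Ω) :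
    ∀ (k : ℕ) (A : Finset (Pt m)) (G : BrGraph m), A.card ≤ k → (A : Set (Pt m)) ⊆ Ω →
    G.IsConn A Ω →
    ∃ (q : Pt m → ℕ) (b : Pt m → ℕ → Pt m) (T₀ : BrGraph m),
      (∀ a ∈ A,
        1 ≤ q a ∧ b a 0 = a ∧ b a (q a) ∈ frontier Ω ∧
        (∀ i < q a, (b a i, b a (i + 1)) ∈ G.E) ∧
        (∀ i ≤ q a, ∀ j ≤ q a, b a i = b a j → i = j)) ∧
      T₀.IsConn ∅ Ω ∧ T₀.E ⊆ G.E ∧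
      ∀ e ∈ G.E,
        G.d e = (if e ∈ T₀.E then T₀.d e else 0) +
          Set.ncard {a : Pt m | a ∈ A ∧ ∃ i < q a, e = (b a i, b a (i + 1))} := by
  intro k
  induction k with
  | zero =>
    intro A G hcard hA hG
    have hA0 : A = ∅ := Finset.card_eq_zero.1 (le_antisymm hcard (Nat.zero_le _))
    subst hA0
    refine ⟨fun _ => 0, fun x _ => x, G, by simp, hG, Finset.Subset.refl _, ?_⟩
    intro e he
    simp [he]
  | succ k ih =>
    intro A G hcard hA hG
    rcases A.eq_empty_or_nonempty with hA0 | ⟨a, ha⟩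
    · subst hA0
      refine ⟨fun _ => 0, fun x _ => x, G, by simp, hG, Finset.Subset.refl _, ?_⟩
      intro e he
      simp [he]
    · have haΩ : a ∈ Ω := hA ha
      obtain ⟨v, hreach, hvfr⟩ := reach_frontier hG ha
      obtain ⟨n0, b0, hb00, hb0n, hb0E⟩ := walk_of_reach hreach
      obtain ⟨n, bp, hbp0, hbpF, hbpE, hbpinj⟩ :=
        dedup_walk (F := frontier Ω) n0 b0 (hb0n ▸ hvfr) hb0E
      rw [hb00] at hbp0
      have hafr : a ∉ frontier Ω := by
        rw [hΩo.frontier_eq]; exact fun h => h.2 haΩ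
      have hn : 1 ≤ n := by
        rcases Nat.eq_zero_or_pos n with h | h
        · rw [h, hbp0] at hbpF; exact absurd hbpF hafr
        · exact h
      have hG' := decrement hG ha hn hbp0 hbpF hbpE hbpinj
      have hcard' : (A.erase a).card ≤ k := by
        have := Finset.card_erase_of_mem ha
        omega
      have hA' : ((A.erase a) : Set (Pt m)) ⊆ Ω := fun x hx =>
        hA (Finset.erase_subset _ _ hx)
      obtain ⟨q', b', T₀, H1, H2, H3, H4⟩ := ih (A.erase a) (decG G bp n) hcard' hA' hG'
      set q : Pt m → ℕ := fun x => if x = a then n else q' x with hq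
      set b : Pt m → ℕ → Pt m := fun x => if x = a then bp else b' x with hb
      have hdecsub : (decG G bp n).E ⊆ G.E := Finset.filter_subset _ _
      refine ⟨q, b, T₀, ?_, H2, H3.trans hdecsub, ?_⟩
      · intro x hx
        by_cases hxa : x = a
        · subst hxa
          simp only [hq, hb, if_pos rfl]
          exact ⟨hn, hbp0, hbpF, hbpE, hbpinj⟩
        · have hx' : x ∈ A.erase a := Finset.mem_erase.2 ⟨hxa, hx⟩
          obtain ⟨c1, c2, c3, c4, c5⟩ := H1 x hx'
          simp only [hq, hb, if_neg hxa]
          exact ⟨c1, c2, c3, fun i hi => hdecsub (c4 i hi), c5⟩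
      · intro e he
        have hncard : Set.ncard {x : Pt m | x ∈ A ∧ ∃ i < q x, e = (b x i, b x (i + 1))}
            = (A.filter (fun x => ∃ i < q x, e = (b x i, b x (i + 1)))).card := by
          rw [show {x : Pt m | x ∈ A ∧ ∃ i < q x, e = (b x i, b x (i + 1))}
              = ↑(A.filter (fun x => ∃ i < q x, e = (b x i, b x (i + 1)))) by
            ext x; simp [Finset.mem_filter]]
          exact Set.ncard_coe_finset _
        have hncard' : Set.ncard {x : Pt m | x ∈ A.erase a ∧
              ∃ i < q' x, e = (b' x i, b' x (i + 1))}
            = ((A.erase a).filter (fun x => ∃ i < q' x, e = (b' x i, b' x (i + 1)))).card := by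
          rw [show {x : Pt m | x ∈ A.erase a ∧ ∃ i < q' x, e = (b' x i, b' x (i + 1))}
              = ↑((A.erase a).filter (fun x => ∃ i < q' x, e = (b' x i, b' x (i + 1)))) by
            ext x; simp [Finset.mem_filter]]
          exact Set.ncard_coe_finset _
        have hfiltercongr :
            (A.erase a).filter (fun x => ∃ i < q x, e = (b x i, b x (i + 1)))
              = (A.erase a).filter (fun x => ∃ i < q' x, e = (b' x i, b' x (i + 1))) := by
          apply Finset.filter_congr
          intro x hx
          have hxa : x ≠ a := (Finset.mem_erase.1 hx).1
          simp [hq, hb, hxa]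
        have hAsplit : A = insert a (A.erase a) := (Finset.insert_erase ha).symm
        have hpa : (∃ i < q a, e = (b a i, b a (i + 1)))
            ↔ (∃ i < n, e = (bp i, bp (i + 1))) := by
          simp [hq, hb]
        have hnotmem : ∀ (p : Pt m → Prop),
            a ∉ (A.erase a).filter p := fun p h =>
          (Finset.mem_erase.1 (Finset.mem_filter.1 h).1).1 rfl
        have hcount : (A.filter (fun x => ∃ i < q x, e = (b x i, b x (i + 1)))).card
            = ((A.erase a).filter (fun x => ∃ i < q' x, e = (b' x i, b' x (i + 1)))).card
              + (if (∃ i < n, e = (bp i, bp (i + 1))) then 1 else 0) := by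
          rw [Finset.card_filter, Finset.card_filter, ← Finset.sum_erase_add _ _ ha]
          congr 1
          · apply Finset.sum_congr rfl
            intro x hx
            have hxa : x ≠ a := (Finset.mem_erase.1 hx).1
            simp [hq, hb, hxa]
          · exact if_congr hpa rfl rfl
        have hpm : pmul bp n e = (if (∃ i < n, e = (bp i, bp (i + 1))) then 1 else 0) := by
          by_cases hp : ∃ i < n, e = (bp i, bp (i + 1))
          · rw [if_pos hp]; exact (pmul_eq_one_iff hbpinj e).2 hp
          · rw [if_neg hp]
            have h1 := pmul_le_one hbpinj e
            rcases Nat.le_one_iff_eq_zero_or_eq_one.1 h1 with h | h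
            · exact h
            · exact absurd ((pmul_eq_one_iff hbpinj e).1 h) hp
        have hid := dec_identity (A := A) (Ω := Ω) hG hbpinj e he
        by_cases hmem : e ∈ (decG G bp n).E
        · have h4 := H4 e hmem
          rw [hncard'] at h4
          rw [if_pos hmem] at hid
          rw [hncard, hcount, hid, h4, hpm]
          ring
        · rw [if_neg hmem] at hid
          have hT : e ∉ T₀.E := fun h => hmem (H3 h)
          have hcnt0 : ((A.erase a).filter
              (fun x => ∃ i < q' x, e = (b' x i, b' x (i + 1)))).card = 0 := by
            rw [Finset.card_eq_zero, Finset.filter_eq_empty_iff]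
            rintro x hx ⟨i, hi, hei⟩
            exact hmem (hei ▸ (H1 x hx).2.2.2.1 i hi)
          rw [hncard, hcount, hcnt0, if_neg hT, hid, hpm]
          ring

/-- Decomposition of a graph `G ∈ 𝒢(A, ∂Ω)` into threads and loops: for each `a ∈ A`
there is a finite sequence of distinct points `a = b^a_0, …, b^a_{q_a}` ending on `∂Ω`
whose consecutive pairs are edges of `G`, and there is a weighted graph `T₀ ∈ 𝒢(∅, ∂Ω)`
with `E(T₀) ⊆ E(G)` such that for every edge `e` of `G`,
`d_G(e) = d_{T₀}(e) + #{a ∈ A : e is one of the consecutive pairs of the thread of a}`,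
where `d_{T₀}(e) = 0` if `e ∉ E(T₀)`. -/
theorem statement9 (m : ℕ) (Ω : Set (Pt m)) (hΩo : IsOpen Ω) (hΩb : Bornology.IsBounded Ω)
    (A : Finset (Pt m)) (hA : (A : Set (Pt m)) ⊆ Ω)
    (G : BrGraph m) (hG : G.IsConn A Ω) :
    ∃ (q : Pt m → ℕ) (b : Pt m → ℕ → Pt m) (T₀ : BrGraph m),
      (∀ a ∈ A,
        1 ≤ q a ∧ b a 0 = a ∧ b a (q a) ∈ frontier Ω ∧
        (∀ i < q a, (b a i, b a (i + 1)) ∈ G.E) ∧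
        (∀ i ≤ q a, ∀ j ≤ q a, b a i = b a j → i = j)) ∧
      T₀.IsConn ∅ Ω ∧ T₀.E ⊆ G.E ∧
      ∀ e ∈ G.E,
        G.d e = (if e ∈ T₀.E then T₀.d e else 0) +
          Set.ncard {a : Pt m | a ∈ A ∧ ∃ i < q a, e = (b a i, b a (i + 1))} :=
  main_aux hΩo A.card A G le_rfl hA hG

end
end

section
/- Let m ≥ 1 be an integer and let α ∈ (1 − 1/m, 1]. For every bounded convex open set Ω ⊆ ℝ^m there exists a constant C(Ω, α) > 0 such that for every finite set A ⊆ Ω one has ℒ^α_brbd(A, ∂Ω) ≤ C(Ω, α) · (#A)^α. -/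
open scoped ENNReal
open scoped Classical

noncomputable section

lemma sum_rpow_le_card_rpow {ι : Type*} (I : Finset ι) (a : ι → ℝ) (ha : ∀ i ∈ I, 0 ≤ a i)
    (α : ℝ) (hα0 : 0 < α) (hα1 : α ≤ 1) :
    ∑ i ∈ I, a i ^ α ≤ (I.card : ℝ) ^ (1 - α) * (∑ i ∈ I, a i) ^ α := by
  rcases I.eq_empty_or_nonempty with h | h
  · subst h
    simp only [Finset.sum_empty, Finset.card_empty, Nat.cast_zero]
    exact mul_nonneg (Real.rpow_nonneg le_rfl _) (Real.rpow_nonneg le_rfl _)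
  · set N : ℝ := (I.card : ℝ) with hN
    have hN0 : (0:ℝ) < N := by
      rw [hN]; exact_mod_cast Finset.card_pos.mpr h
    have hp : 1 ≤ 1 / α := by
      rw [le_div_iff₀ hα0]; linarith
    have key := Real.arith_mean_le_rpow_mean I (fun _ => 1 / N) (fun i => a i ^ α)
      (fun i _ => by positivity) (by
        simp only [Finset.sum_const, nsmul_eq_mul, ← hN]
        field_simp)
      (fun i hi => Real.rpow_nonneg (ha i hi) α) hp
    have hsimp : ∀ i ∈ I, (1 / N) * (a i ^ α) ^ (1 / α) = (1 / N) * a i := by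
      intro i hi
      rw [← Real.rpow_mul (ha i hi), mul_one_div_cancel hα0.ne', Real.rpow_one]
    rw [Finset.sum_congr rfl hsimp, one_div_one_div] at key
    -- key : ∑ 1/N * a i ^ α ≤ (∑ 1/N * a i) ^ α
    rw [← Finset.mul_sum, ← Finset.mul_sum] at key
    have hS : 0 ≤ ∑ i ∈ I, a i := Finset.sum_nonneg ha
    have step : ∑ i ∈ I, a i ^ α ≤ N * ((1/N) * ∑ i ∈ I, a i) ^ α := by
      have := mul_le_mul_of_nonneg_left key hN0.le
      calc ∑ i ∈ I, a i ^ α = N * ((1/N) * ∑ i ∈ I, a i ^ α) := by field_simp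
        _ ≤ N * ((1/N) * ∑ i ∈ I, a i) ^ α := this
    calc ∑ i ∈ I, a i ^ α ≤ N * ((1/N) * ∑ i ∈ I, a i) ^ α := step
      _ = N ^ (1-α) * (∑ i ∈ I, a i) ^ α := by
          rw [Real.mul_rpow (by positivity) hS, one_div, Real.inv_rpow hN0.le,
            show (1-α) = 1 + (-α) by ring, Real.rpow_add hN0, Real.rpow_one,
            Real.rpow_neg hN0.le]
          ring
      _ ≤ _ := le_rfl

lemma norm_le_sqrt_mul {m : ℕ} (x y : EuclideanSpace ℝ (Fin m)) (s : ℝ) (hs : 0 ≤ s)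
    (h : ∀ i, |x i - y i| ≤ s) : ‖x - y‖ ≤ Real.sqrt m * s := by
  rw [EuclideanSpace.norm_eq]
  have h1 : ∀ i : Fin m, ‖(x - y) i‖ ^ 2 ≤ s ^ 2 := by
    intro i
    have : (x - y) i = x i - y i := rfl
    rw [this, Real.norm_eq_abs]
    exact pow_le_pow_left₀ (abs_nonneg _) (h i) 2
  calc Real.sqrt (∑ i, ‖(x - y) i‖ ^ 2) ≤ Real.sqrt (∑ _i : Fin m, s ^ 2) :=
        Real.sqrt_le_sqrt (Finset.sum_le_sum fun i _ => h1 i)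
    _ = Real.sqrt ((m : ℝ) * s ^ 2) := by
        rw [Finset.sum_const, Finset.card_univ, Fintype.card_fin, nsmul_eq_mul]
    _ = Real.sqrt m * s := by
        rw [Real.sqrt_mul (Nat.cast_nonneg m), Real.sqrt_sq hs]

lemma coord_le_norm {m : ℕ} (x : EuclideanSpace ℝ (Fin m)) (i : Fin m) : |x i| ≤ ‖x‖ := by
  rw [EuclideanSpace.norm_eq, ← Real.sqrt_sq_eq_abs]
  apply Real.sqrt_le_sqrt
  calc x i ^ 2 = ‖x i‖ ^ 2 := by rw [Real.norm_eq_abs, sq_abs]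
    _ ≤ ∑ j : Fin m, ‖x j‖ ^ 2 :=
        Finset.single_le_sum (f := fun j => ‖x j‖ ^ 2) (fun j _ => by positivity) (Finset.mem_univ i)


structure GSpec {m : ℕ} (B : Finset (Pt m)) (r : Pt m) (G : BrGraph m) : Prop where
  hV : G.V = B
  hr : r ∈ B
  hE : ∀ e ∈ G.E, e.1 ∈ B ∧ e.2 ∈ B ∧ e.1 ≠ e.2
  hAnti : ∀ e ∈ G.E, (e.2, e.1) ∉ G.E
  hd : ∀ e ∈ G.E, 1 ≤ G.d e
  hRootOut : G.E.filter (fun e => e.1 = r) = ∅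
  hKir : ∀ a ∈ B, a ≠ r →
    (∑ e ∈ G.E.filter (fun e => e.1 = a), G.d e) =
      (∑ e ∈ G.E.filter (fun e => e.2 = a), G.d e) + 1
  hRootIn : (∑ e ∈ G.E.filter (fun e => e.2 = r), G.d e) + 1 = B.card

lemma GSpec.srcEmpty {m : ℕ} {B r G} (h : @GSpec m B r G) {a : Pt m} (ha : a ∉ B) :
    G.E.filter (fun e => e.1 = a) = ∅ := by
  rw [Finset.filter_eq_empty_iff]
  intro e he heq
  exact ha (heq ▸ (h.hE e he).1)

lemma GSpec.tgtEmpty {m : ℕ} {B r G} (h : @GSpec m B r G) {a : Pt m} (ha : a ∉ B) :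
    G.E.filter (fun e => e.2 = a) = ∅ := by
  rw [Finset.filter_eq_empty_iff]
  intro e he heq
  exact ha (heq ▸ (h.hE e he).2.1)

lemma merge {m : ℕ} {B1 B2 : Finset (Pt m)} {r1 r2 : Pt m} {G1 G2 : BrGraph m}
    (h1 : GSpec B1 r1 G1) (h2 : GSpec B2 r2 G2) (hdisj : Disjoint B1 B2) (α : ℝ) :
    ∃ G : BrGraph m, GSpec (B1 ∪ B2) r1 G ∧
      G.cost α = G1.cost α + G2.cost α + ((B2.card : ℝ)) ^ α * ‖r1 - r2‖ := by
  have hr2n1 : r2 ∉ B1 := Finset.disjoint_right.mp hdisj h2.hr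
  have hr1n2 : r1 ∉ B2 := Finset.disjoint_left.mp hdisj h1.hr
  have hr21 : r2 ≠ r1 := fun h => hr2n1 (h ▸ h1.hr)
  have hEdisj : Disjoint G1.E G2.E := by
    rw [Finset.disjoint_left]
    intro e he1 he2
    exact Finset.disjoint_left.mp hdisj (h1.hE e he1).1 (h2.hE e he2).1
  have hnew1 : (r2, r1) ∉ G1.E := fun h => hr2n1 (h1.hE _ h).1
  have hnew2 : (r2, r1) ∉ G2.E := fun h => hr1n2 (h2.hE _ h).2.1
  set E' : Finset (Pt m × Pt m) := insert (r2, r1) (G1.E ∪ G2.E) with hE'def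
  set d' : Pt m × Pt m → ℕ :=
    fun e => if e = (r2, r1) then B2.card else if e ∈ G1.E then G1.d e else G2.d e with hd'def
  have hd1 : ∀ e ∈ G1.E, d' e = G1.d e := by
    intro e he
    rw [hd'def]
    simp only
    rw [if_neg (by rintro rfl; exact hnew1 he), if_pos he]
  have hd2 : ∀ e ∈ G2.E, d' e = G2.d e := by
    intro e he
    rw [hd'def]
    simp only
    rw [if_neg (by rintro rfl; exact hnew2 he),
      if_neg (fun h => Finset.disjoint_left.mp hEdisj h he)]
  have hdnew : d' (r2, r1) = B2.card := by rw [hd'def]; simp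
  have hsplit : ∀ {M : Type} [AddCommMonoid M] (F : Pt m × Pt m → M) (P : Pt m × Pt m → Prop) [DecidablePred P],
      ∑ e ∈ E'.filter P, F e
        = (if P (r2, r1) then F (r2, r1) else 0)
          + (∑ e ∈ G1.E.filter P, F e + ∑ e ∈ G2.E.filter P, F e) := by
    intro M _ F P _
    have hun : (r2, r1) ∉ (G1.E ∪ G2.E).filter P := by
      simp only [Finset.mem_filter, Finset.mem_union]
      rintro ⟨h | h, -⟩
      exacts [hnew1 h, hnew2 h]
    rw [hE'def, Finset.filter_insert]
    by_cases hP : P (r2, r1)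
    · rw [if_pos hP, Finset.sum_insert hun, Finset.filter_union,
        Finset.sum_union (Finset.disjoint_filter_filter hEdisj), if_pos hP]
    · rw [if_neg hP, Finset.filter_union,
        Finset.sum_union (Finset.disjoint_filter_filter hEdisj), if_neg hP, zero_add]
  have hsum : ∀ (P : Pt m × Pt m → Prop) [DecidablePred P],
      ∑ e ∈ E'.filter P, d' e
        = (if P (r2, r1) then B2.card else 0)
          + (∑ e ∈ G1.E.filter P, G1.d e + ∑ e ∈ G2.E.filter P, G2.d e) := by
    intro P _
    rw [hsplit d' P]
    congr 1
    · split_ifs <;> simp [hdnew]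
    · congr 1
      · exact Finset.sum_congr rfl fun e he => hd1 e (Finset.mem_of_mem_filter e he)
      · exact Finset.sum_congr rfl fun e he => hd2 e (Finset.mem_of_mem_filter e he)
  have hn2 : 1 ≤ B2.card := Finset.card_pos.mpr ⟨r2, h2.hr⟩
  refine ⟨⟨B1 ∪ B2, E', d'⟩, ?_, ?_⟩
  · constructor
    · rfl
    · exact Finset.mem_union_left _ h1.hr
    · intro e he
      rcases Finset.mem_insert.mp he with rfl | he
      · exact ⟨Finset.mem_union_right _ h2.hr, Finset.mem_union_left _ h1.hr, hr21⟩
      · rcases Finset.mem_union.mp he with he | he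
        · obtain ⟨a, b, c⟩ := h1.hE e he
          exact ⟨Finset.mem_union_left _ a, Finset.mem_union_left _ b, c⟩
        · obtain ⟨a, b, c⟩ := h2.hE e he
          exact ⟨Finset.mem_union_right _ a, Finset.mem_union_right _ b, c⟩
    · intro e he hrev
      rcases Finset.mem_insert.mp he with rfl | he
      · simp only at hrev
        rcases Finset.mem_insert.mp hrev with h | h
        · exact hr21 (congrArg Prod.fst h).symm
        · rcases Finset.mem_union.mp h with h | h
          · exact hr2n1 ((h1.hE _ h).2.1)
          · exact hr1n2 ((h2.hE _ h).1)
      · rcases Finset.mem_union.mp he with he1 | he2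
        · rcases Finset.mem_insert.mp hrev with h | h
          · -- (e.2, e.1) = (r2, r1), so e = (r1, r2), e.2 = r2 ∈ B1, contra
            have : e.2 = r2 := congrArg Prod.fst h
            exact hr2n1 (this ▸ (h1.hE e he1).2.1)
          · rcases Finset.mem_union.mp h with h | h
            · exact h1.hAnti e he1 h
            · exact Finset.disjoint_left.mp hdisj (h1.hE e he1).2.1 (h2.hE _ h).1
        · rcases Finset.mem_insert.mp hrev with h | h
          · have : e.1 = r1 := congrArg Prod.snd h
            exact hr1n2 (this ▸ (h2.hE e he2).1)
          · rcases Finset.mem_union.mp h with h | h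
            · exact Finset.disjoint_left.mp hdisj (h1.hE _ h).1 (h2.hE e he2).2.1
            · exact h2.hAnti e he2 h
    · intro e he
      show 1 ≤ d' e
      rcases Finset.mem_insert.mp he with rfl | he
      · rw [hdnew]; exact hn2
      · rcases Finset.mem_union.mp he with he | he
        · rw [hd1 e he]; exact h1.hd e he
        · rw [hd2 e he]; exact h2.hd e he
    · show E'.filter (fun e => e.1 = r1) = ∅
      rw [Finset.filter_eq_empty_iff]
      intro e he heq
      rcases Finset.mem_insert.mp he with rfl | he
      · exact hr21 heq
      · rcases Finset.mem_union.mp he with he | he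
        · have := Finset.eq_empty_iff_forall_notMem.mp h1.hRootOut e
          exact this (Finset.mem_filter.mpr ⟨he, heq⟩)
        · exact hr1n2 (heq ▸ (h2.hE e he).1)
    · intro a ha hane
      show ∑ e ∈ E'.filter (fun e => e.1 = a), d' e = (∑ e ∈ E'.filter (fun e => e.2 = a), d' e) + 1
      rw [hsum, hsum]
      rcases Finset.mem_union.mp ha with haB | haB
      · have har2 : r2 ≠ a := fun h => hr2n1 (h ▸ haB)
        have har1 : r1 ≠ a := fun h => hane h.symm
        have hnaB2 : a ∉ B2 := Finset.disjoint_left.mp hdisj haB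
        rw [if_neg har2, if_neg har1, h2.srcEmpty hnaB2, h2.tgtEmpty hnaB2]
        simp only [Finset.sum_empty, add_zero, zero_add]
        exact h1.hKir a haB hane
      · have hnaB1 : a ∉ B1 := Finset.disjoint_right.mp hdisj haB
        have har1 : r1 ≠ a := fun h => hnaB1 (h ▸ h1.hr)
        rw [if_neg har1, h1.srcEmpty hnaB1, h1.tgtEmpty hnaB1]
        simp only [Finset.sum_empty, add_zero, zero_add]
        by_cases har2 : a = r2
        · subst har2
          rw [if_pos rfl, h2.hRootOut]
          simp only [Finset.sum_empty, add_zero]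
          have := h2.hRootIn
          omega
        · rw [if_neg (fun h => har2 h.symm)]
          simp only [zero_add]
          exact h2.hKir a haB har2
    · show (∑ e ∈ E'.filter (fun e => e.2 = r1), d' e) + 1 = (B1 ∪ B2).card
      rw [hsum, if_pos rfl, h2.tgtEmpty hr1n2]
      simp only [Finset.sum_empty, add_zero]
      have := h1.hRootIn
      rw [Finset.card_union_of_disjoint hdisj]
      omega
  · show ∑ e ∈ E', (d' e : ℝ) ^ α * ‖e.2 - e.1‖ = _
    rw [← Finset.filter_true (s := E'),
      hsplit (fun e => (d' e : ℝ) ^ α * ‖e.2 - e.1‖) (fun _ => True), if_pos trivial]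
    simp only [Finset.filter_true]
    have c1 : ∑ e ∈ G1.E, (d' e : ℝ) ^ α * ‖e.2 - e.1‖ = G1.cost α :=
      Finset.sum_congr rfl fun e he => by rw [hd1 e he]
    have c2 : ∑ e ∈ G2.E, (d' e : ℝ) ^ α * ‖e.2 - e.1‖ = G2.cost α :=
      Finset.sum_congr rfl fun e he => by rw [hd2 e he]
    rw [c1, c2, hdnew]
    ring

lemma mergeMany {m : ℕ} {ι : Type} (α D : ℝ) (hα0 : 0 ≤ α) (hD : 0 ≤ D)
    (I : Finset ι) (B : ι → Finset (Pt m)) (r : ι → Pt m) (G : ι → BrGraph m)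
    (hne : I.Nonempty)
    (hspec : ∀ i ∈ I, GSpec (B i) (r i) (G i))
    (hdisj : ∀ i ∈ I, ∀ j ∈ I, i ≠ j → Disjoint (B i) (B j))
    (hdist : ∀ x ∈ I.biUnion B, ∀ y ∈ I.biUnion B, ‖x - y‖ ≤ D) :
    ∃ (G' : BrGraph m) (r' : Pt m), GSpec (I.biUnion B) r' G' ∧
      G'.cost α ≤ (∑ i ∈ I, (G i).cost α) + D * ∑ i ∈ I, ((B i).card : ℝ) ^ α := by
  classical
  induction I using Finset.cons_induction with
  | empty => exact absurd hne (by simp)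
  | cons a s ha ih =>
    have haI : a ∈ Finset.cons a s ha := Finset.mem_cons_self a s
    have hbiU : (Finset.cons a s ha).biUnion B = s.biUnion B ∪ B a := by
      simp [Finset.cons_eq_insert, Finset.biUnion_insert, Finset.union_comm]
    by_cases hs : s.Nonempty
    · obtain ⟨G', r', hspec', hcost'⟩ := ih hs
        (fun i hi => hspec i (Finset.mem_cons_of_mem hi))
        (fun i hi j hj hij => hdisj i (Finset.mem_cons_of_mem hi) j (Finset.mem_cons_of_mem hj) hij)
        (fun x hx y hy => hdist x (by rw [hbiU]; exact Finset.mem_union_left _ hx)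
          y (by rw [hbiU]; exact Finset.mem_union_left _ hy))
      have hdisj2 : Disjoint (s.biUnion B) (B a) := by
        rw [Finset.disjoint_biUnion_left]
        intro i hi
        exact hdisj i (Finset.mem_cons_of_mem hi) a haI (fun h => ha (h ▸ hi))
      obtain ⟨G'', hspec'', hcost''⟩ :=
        merge hspec' (hspec a haI) hdisj2 α
      refine ⟨G'', r', by rw [hbiU]; exact hspec'', ?_⟩
      rw [hcost'']
      have hra : ‖r' - r a‖ ≤ D := by
        apply hdist
        · rw [hbiU]; exact Finset.mem_union_left _ hspec'.hr
        · rw [hbiU]; exact Finset.mem_union_right _ (hspec a haI).hr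
      have h1 : ((B a).card : ℝ) ^ α * ‖r' - r a‖ ≤ ((B a).card : ℝ) ^ α * D :=
        mul_le_mul_of_nonneg_left hra (Real.rpow_nonneg (Nat.cast_nonneg _) α)
      rw [Finset.sum_cons, Finset.sum_cons]
      have := add_le_add hcost' h1
      calc G'.cost α + (G a).cost α + ((B a).card : ℝ) ^ α * ‖r' - r a‖
          ≤ ((∑ i ∈ s, (G i).cost α) + D * ∑ i ∈ s, ((B i).card : ℝ) ^ α) + (G a).cost α
            + ((B a).card : ℝ) ^ α * D := by linarith
        _ = ((G a).cost α + ∑ i ∈ s, (G i).cost α)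
            + D * (((B a).card : ℝ) ^ α + ∑ i ∈ s, ((B i).card : ℝ) ^ α) := by ring
    · rw [Finset.not_nonempty_iff_eq_empty] at hs
      subst hs
      have hb : (Finset.cons a ∅ ha).biUnion B = B a := by simp
      refine ⟨G a, r a, by rw [hb]; exact hspec a haI, ?_⟩
      rw [Finset.sum_cons, Finset.sum_cons]
      simp only [Finset.sum_empty, add_zero]
      have : 0 ≤ D * ((B a).card : ℝ) ^ α :=
        mul_nonneg hD (Real.rpow_nonneg (Nat.cast_nonneg _) α)
      linarith

lemma build {m : ℕ} (α : ℝ) (hα0 : 0 < α) (hα1 : α ≤ 1) (K : ℝ) (hK0 : 0 ≤ K)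
    (hKβ : (Real.sqrt m + K / 2) * (((2:ℝ) ^ m : ℝ) ^ (1 - α)) ≤ K) :
    ∀ (k : ℕ) (c : Pt m) (s : ℝ), 0 < s → ∀ B : Finset (Pt m), B.Nonempty →
      (∀ x ∈ B, ∀ i, c i ≤ x i ∧ x i < c i + s) →
      (∀ x ∈ B, ∀ y ∈ B, x ≠ y → ∃ i, s / 2 ^ k ≤ |x i - y i|) →
      ∃ (G : BrGraph m) (r : Pt m), GSpec B r G ∧ G.cost α ≤ K * s * (B.card : ℝ) ^ α := by
  intro k
  induction k with
  | zero =>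
    intro c s hs B hB hcube hsep
    obtain ⟨r, hr⟩ := hB
    have hBr : B = {r} := by
      apply Finset.eq_singleton_iff_unique_mem.mpr ⟨hr, ?_⟩
      intro x hx
      by_contra hxr
      obtain ⟨i, hi⟩ := hsep x hx r hr hxr
      have h1 := hcube x hx i
      have h2 := hcube r hr i
      rw [pow_zero, div_one] at hi
      have : |x i - r i| < s := abs_sub_lt_iff.mpr ⟨by linarith [h1.1, h1.2, h2.1, h2.2], by linarith [h1.1, h1.2, h2.1, h2.2]⟩
      linarith
    refine ⟨⟨B, ∅, fun _ => 1⟩, r, ?_, ?_⟩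
    · constructor
      · rfl
      · exact hr
      · intro e he; exact absurd he (Finset.notMem_empty e)
      · intro e he; exact absurd he (Finset.notMem_empty e)
      · intro e he; exact absurd he (Finset.notMem_empty e)
      · exact Finset.filter_empty _
      · intro a ha hane
        rw [hBr] at ha
        exact absurd (Finset.mem_singleton.mp ha) hane
      · show (∑ e ∈ (∅ : Finset (Pt m × Pt m)).filter _, 1) + 1 = B.card
        rw [hBr]
        simp
    · show ∑ e ∈ (∅ : Finset (Pt m × Pt m)), ((1:ℕ) : ℝ) ^ α * ‖e.2 - e.1‖ ≤ _
      rw [Finset.sum_empty, hBr]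
      simp only [Finset.card_singleton, Nat.cast_one, Real.one_rpow, mul_one]
      positivity
  | succ k ih =>
    intro c s hs B hB hcube hsep
    set sig : Pt m → (Fin m → Bool) := fun x i => if c i + s / 2 ≤ x i then true else false
      with hsigdef
    set Bf : (Fin m → Bool) → Finset (Pt m) := fun f => B.filter (fun x => sig x = f) with hBfdef
    set I : Finset (Fin m → Bool) := Finset.univ.filter (fun f => (Bf f).Nonempty) with hIdef
    have hmemBf : ∀ x ∈ B, x ∈ Bf (sig x) := fun x hx => Finset.mem_filter.mpr ⟨hx, rfl⟩
    have hBfsub : ∀ f, Bf f ⊆ B := fun f => Finset.filter_subset _ _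
    have hIne : I.Nonempty := by
      obtain ⟨x, hx⟩ := hB
      exact ⟨sig x, Finset.mem_filter.mpr ⟨Finset.mem_univ _, ⟨x, hmemBf x hx⟩⟩⟩
    have hBun : I.biUnion Bf = B := by
      ext x
      constructor
      · intro hx
        obtain ⟨f, -, hxf⟩ := Finset.mem_biUnion.mp hx
        exact hBfsub f hxf
      · intro hx
        exact Finset.mem_biUnion.mpr ⟨sig x,
          Finset.mem_filter.mpr ⟨Finset.mem_univ _, ⟨x, hmemBf x hx⟩⟩, hmemBf x hx⟩
    have hdisjf : ∀ f ∈ I, ∀ g ∈ I, f ≠ g → Disjoint (Bf f) (Bf g) := by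
      intro f _ g _ hfg
      rw [Finset.disjoint_left]
      intro x hxf hxg
      exact hfg ((Finset.mem_filter.mp hxf).2.symm.trans (Finset.mem_filter.mp hxg).2)
    have hsig_true : ∀ x (i : Fin m), sig x i = true ↔ c i + s / 2 ≤ x i := by
      intro x i
      rw [hsigdef]
      simp only
      split_ifs with h <;> simp [h]
    -- subgraphs
    have hsub : ∀ f, ∃ (G : BrGraph m) (r : Pt m), f ∈ I →
        (GSpec (Bf f) r G ∧ G.cost α ≤ K * (s / 2) * ((Bf f).card : ℝ) ^ α) := by
      intro f
      by_cases hf : f ∈ I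
      · have hfne : (Bf f).Nonempty := (Finset.mem_filter.mp hf).2
        have harg1 : ∀ x ∈ Bf f, ∀ i, (fun i => if f i then c i + s / 2 else c i) i ≤ x i ∧
            x i < (fun i => if f i then c i + s / 2 else c i) i + s / 2 := ?_
        have harg2 : ∀ x ∈ Bf f, ∀ y ∈ Bf f, x ≠ y → ∃ i, s / 2 / 2 ^ k ≤ |x i - y i| := ?_
        · obtain ⟨G, r, hG, hc⟩ := ih (WithLp.toLp 2 (fun i => if f i then c i + s / 2 else c i)) (s / 2)
            (by linarith) (Bf f) hfne harg1 harg2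
          exact ⟨G, r, fun _ => ⟨hG, hc⟩⟩
        · intro x hx y hy hxy
          obtain ⟨i, hi⟩ := hsep x (hBfsub f hx) y (hBfsub f hy) hxy
          refine ⟨i, ?_⟩
          have : s / 2 / 2 ^ k = s / 2 ^ (k + 1) := by
            rw [div_div, ← pow_succ']
          rw [this]
          exact hi
        · intro x hx i
          have hxB : x ∈ B := hBfsub f hx
          have hsx : sig x = f := (Finset.mem_filter.mp hx).2
          have h1 := hcube x hxB i
          by_cases hfi : f i
          · have : c i + s / 2 ≤ x i := (hsig_true x i).mp (by rw [hsx]; exact hfi)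
            simp only [hfi, if_pos]
            constructor <;> linarith [h1.2]
          · have : ¬ (c i + s / 2 ≤ x i) := by
              intro hcon
              exact hfi (hsx ▸ (hsig_true x i).mpr hcon)
            have hfalse : f i = false := by simpa using hfi
            have h2 : x i < c i + s / 2 := lt_of_not_ge this
            simp only [hfalse, Bool.false_eq_true, if_false]
            exact ⟨h1.1, by linarith⟩
      · exact ⟨⟨∅, ∅, fun _ => 0⟩, 0, fun h => absurd h hf⟩
    choose Gf rf hGf using hsub
    have hspec : ∀ f ∈ I, GSpec (Bf f) (rf f) (Gf f) := fun f hf => (hGf f hf).1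
    have hcostf : ∀ f ∈ I, (Gf f).cost α ≤ K * (s / 2) * ((Bf f).card : ℝ) ^ α :=
      fun f hf => (hGf f hf).2
    have hdist : ∀ x ∈ I.biUnion Bf, ∀ y ∈ I.biUnion Bf, ‖x - y‖ ≤ Real.sqrt m * s := by
      rw [hBun]
      intro x hx y hy
      apply norm_le_sqrt_mul x y s hs.le
      intro i
      have h1 := hcube x hx i
      have h2 := hcube y hy i
      rw [abs_sub_le_iff]
      constructor <;> linarith [h1.1, h1.2, h2.1, h2.2]
    obtain ⟨G', r', hspec', hcost'⟩ := mergeMany α (Real.sqrt m * s) hα0.le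
      (by positivity) I Bf rf Gf hIne hspec hdisjf hdist
    rw [hBun] at hspec'
    refine ⟨G', r', hspec', ?_⟩
    -- cost chain
    have hcards : ∑ f ∈ I, ((Bf f).card : ℝ) = (B.card : ℝ) := by
      rw [← hBun, Finset.card_biUnion hdisjf]
      push_cast
      rfl
    have hHold : ∑ f ∈ I, ((Bf f).card : ℝ) ^ α ≤ (((2:ℝ) ^ m : ℝ)) ^ (1 - α) * (B.card : ℝ) ^ α := by
      calc ∑ f ∈ I, ((Bf f).card : ℝ) ^ α
          ≤ (I.card : ℝ) ^ (1 - α) * (∑ f ∈ I, ((Bf f).card : ℝ)) ^ α :=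
            sum_rpow_le_card_rpow I _ (fun i _ => Nat.cast_nonneg _) α hα0 hα1
        _ ≤ (((2:ℝ) ^ m : ℝ)) ^ (1 - α) * (B.card : ℝ) ^ α := by
            rw [hcards]
            apply mul_le_mul_of_nonneg_right _ (Real.rpow_nonneg (Nat.cast_nonneg _) α)
            apply Real.rpow_le_rpow (Nat.cast_nonneg _) _ (by linarith)
            calc (I.card : ℝ) ≤ ((Finset.univ : Finset (Fin m → Bool)).card : ℝ) := by
                  exact_mod_cast Finset.card_le_card (Finset.subset_univ _)
              _ = (2:ℝ) ^ m := by
                  rw [Finset.card_univ]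
                  simp [Fintype.card_fun]
    have hsum1 : ∑ f ∈ I, (Gf f).cost α ≤ K * (s / 2) * ∑ f ∈ I, ((Bf f).card : ℝ) ^ α := by
      rw [Finset.mul_sum]
      exact Finset.sum_le_sum hcostf
    have hSnn : 0 ≤ ∑ f ∈ I, ((Bf f).card : ℝ) ^ α :=
      Finset.sum_nonneg fun f _ => Real.rpow_nonneg (Nat.cast_nonneg _) α
    have hnB : 0 ≤ (B.card : ℝ) ^ α := Real.rpow_nonneg (Nat.cast_nonneg _) α
    calc G'.cost α ≤ (∑ f ∈ I, (Gf f).cost α) + (Real.sqrt m * s) * ∑ f ∈ I, ((Bf f).card : ℝ) ^ α := hcost'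
      _ ≤ K * (s / 2) * ∑ f ∈ I, ((Bf f).card : ℝ) ^ α
          + (Real.sqrt m * s) * ∑ f ∈ I, ((Bf f).card : ℝ) ^ α := by linarith
      _ = (Real.sqrt m + K / 2) * s * ∑ f ∈ I, ((Bf f).card : ℝ) ^ α := by ring
      _ ≤ (Real.sqrt m + K / 2) * s * ((((2:ℝ) ^ m : ℝ)) ^ (1 - α) * (B.card : ℝ) ^ α) := by
          apply mul_le_mul_of_nonneg_left hHold
          have : (0:ℝ) ≤ Real.sqrt m := Real.sqrt_nonneg m
          positivity
      _ = ((Real.sqrt m + K / 2) * (((2:ℝ) ^ m : ℝ)) ^ (1 - α)) * s * (B.card : ℝ) ^ α := by ring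
      _ ≤ K * s * (B.card : ℝ) ^ α := by
          apply mul_le_mul_of_nonneg_right _ hnB
          exact mul_le_mul_of_nonneg_right hKβ hs.le

lemma exists_uniform_fuel {γ : Type*} (F : Finset γ) (Q : ℕ → γ → Prop)
    (mono : ∀ k k' x, k ≤ k' → Q k x → Q k' x) (h : ∀ x ∈ F, ∃ k, Q k x) :
    ∃ k, ∀ x ∈ F, Q k x := by
  classical
  induction F using Finset.cons_induction with
  | empty => exact ⟨0, by simp⟩
  | cons a F' ha ih =>
    obtain ⟨k1, hk1⟩ := h a (Finset.mem_cons_self a F')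
    obtain ⟨k2, hk2⟩ := ih (fun x hx => h x (Finset.mem_cons_of_mem hx))
    refine ⟨max k1 k2, fun x hx => ?_⟩
    rcases Finset.mem_cons.mp hx with rfl | hx
    · exact mono k1 _ x (le_max_left _ _) hk1
    · exact mono k2 _ x (le_max_right _ _) (hk2 x hx)

/-- Xia's estimate: for `m ≥ 1` and `α ∈ (1 − 1/m, 1]`, every bounded convex open set
`Ω ⊆ ℝ^m` admits a constant `C(Ω, α) > 0` such that for every finite `A ⊆ Ω`,
`ℒ^α_brbd(A, ∂Ω) ≤ C(Ω, α)·(#A)^α`. -/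
theorem statement11 (m : ℕ) (hm : 1 ≤ m) (α : ℝ)
    (hαl : 1 - 1 / (m : ℝ) < α) (hα1 : α ≤ 1)
    (Ω : Set (Pt m)) (hΩo : IsOpen Ω) (hΩc : Convex ℝ Ω) (hΩb : Bornology.IsBounded Ω) :
    ∃ C : ℝ, 0 < C ∧
      ∀ A : Finset (Pt m), (A : Set (Pt m)) ⊆ Ω →
        Lbrbd m α A Ω ≤ ENNReal.ofReal (C * (A.card : ℝ) ^ α) := by
  classical
  -- the scaling constant
  set β : ℝ := (((2:ℝ) ^ m : ℝ)) ^ (1 - α) with hβdef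
  have hm0 : (0:ℝ) < (m:ℝ) := by exact_mod_cast hm
  have hα0 : 0 < α := by
    have h1m : 1 / (m:ℝ) ≤ 1 := by
      rw [div_le_one hm0]; exact_mod_cast hm
    linarith
  have hsm1 : (1:ℝ) ≤ Real.sqrt m := Real.one_le_sqrt.mpr (by exact_mod_cast hm)
  have hsm0 : (0:ℝ) < Real.sqrt m := by linarith
  have hβlt : β < 2 := by
    rw [hβdef, ← Real.rpow_natCast 2 m, ← Real.rpow_mul (by norm_num)]
    have hexp : (m:ℝ) * (1 - α) < 1 := by
      have h1 : 1 - α < 1 / (m:ℝ) := by linarith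
      have h2 : (m:ℝ) * (1 - α) < (m:ℝ) * (1 / (m:ℝ)) :=
        mul_lt_mul_of_pos_left h1 hm0
      rw [mul_one_div, div_self hm0.ne'] at h2
      exact h2
    calc (2:ℝ) ^ ((m:ℝ) * (1 - α)) < (2:ℝ) ^ (1:ℝ) :=
          Real.rpow_lt_rpow_of_exponent_lt one_lt_two hexp
      _ = 2 := Real.rpow_one 2
  have hβ0 : 0 ≤ β := Real.rpow_nonneg (by positivity) _
  have h2β : 0 < 2 - β := by linarith
  set K : ℝ := 4 * Real.sqrt m / (2 - β) with hKdef
  have hK0 : 0 < K := by rw [hKdef]; positivity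
  have hKval : K * (2 - β) = 4 * Real.sqrt m := by
    rw [hKdef]; field_simp
  have hKβ : (Real.sqrt m + K / 2) * β ≤ K := by nlinarith [mul_pos hsm0 h2β]
  -- the bounding cube
  obtain ⟨R, hR⟩ := hΩb.subset_closedBall 0
  set s : ℝ := 2 * |R| + 2 with hsdef
  have hs : 0 < s := by rw [hsdef]; positivity
  refine ⟨(K + 1) * s, by positivity, ?_⟩
  intro A hA
  rcases A.eq_empty_or_nonempty with rfl | hAne
  · -- empty set: the empty graph connects
    have hconn : (⟨∅, ∅, fun _ => 1⟩ : BrGraph m).IsConn ∅ Ω := by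
      refine ⟨by simp, by simp, ?_, ?_, ?_, ?_⟩ <;> intro e he <;> simp at he
    refine le_trans (iInf_le_of_le ⟨∅, ∅, fun _ => 1⟩ (iInf_le_of_le hconn le_rfl)) ?_
    have : BrGraph.cost (m := m) α ⟨∅, ∅, fun _ => 1⟩ = 0 := by
      simp [BrGraph.cost]
    rw [this, ENNReal.ofReal_zero]
    exact zero_le
  · -- nonempty set
    have hnorm : ∀ x ∈ A, ‖x‖ ≤ |R| := by
      intro x hx
      have : x ∈ Metric.closedBall (0 : Pt m) R := hR (hA hx)
      rw [Metric.mem_closedBall, dist_zero_right] at this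
      exact this.trans (le_abs_self R)
    set c : Pt m := WithLp.toLp 2 (fun _ => -(|R| + 1)) with hcdef
    have hcube : ∀ x ∈ A, ∀ i, c i ≤ x i ∧ x i < c i + s := by
      intro x hx i
      have h1 : |x i| ≤ |R| := (coord_le_norm x i).trans (hnorm x hx)
      rw [abs_le] at h1
      constructor
      · show -(|R| + 1) ≤ x i; linarith
      · show x i < -(|R| + 1) + (2 * |R| + 2); linarith
    -- fuel
    obtain ⟨k, hk⟩ := exists_uniform_fuel ((A ×ˢ A).filter (fun p => p.1 ≠ p.2))
      (fun k p => ∃ i, s / 2 ^ k ≤ |p.1 i - p.2 i|)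
      (by
        intro k k' p hkk' ⟨i, hi⟩
        refine ⟨i, le_trans ?_ hi⟩
        have h2 : (2:ℝ) ^ k ≤ 2 ^ k' := pow_le_pow_right₀ one_le_two hkk'
        exact div_le_div_of_nonneg_left hs.le (by positivity) h2)
      (by
        intro p hp
        have hne : p.1 ≠ p.2 := (Finset.mem_filter.mp hp).2
        have : ∃ i, p.1 i ≠ p.2 i := by
          by_contra hcon
          push_neg at hcon
          exact hne (PiLp.ext hcon)
        obtain ⟨i, hi⟩ := this
        have hδ : 0 < |p.1 i - p.2 i| := abs_pos.mpr (sub_ne_zero.mpr hi)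
        obtain ⟨k, hk⟩ := pow_unbounded_of_one_lt (s / |p.1 i - p.2 i|) one_lt_two
        refine ⟨k, i, ?_⟩
        rw [div_le_iff₀ (by positivity)]
        rw [div_lt_iff₀ hδ] at hk
        nlinarith)
    have hsep : ∀ x ∈ A, ∀ y ∈ A, x ≠ y → ∃ i, s / 2 ^ k ≤ |x i - y i| := by
      intro x hx y hy hxy
      exact hk (x, y) (Finset.mem_filter.mpr ⟨Finset.mem_product.mpr ⟨hx, hy⟩, hxy⟩)
    obtain ⟨G, r, hspecA, hcostA⟩ := build α hα0 hα1 K hK0.le hKβ k c s hs A hAne hcube hsep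
    -- boundary point
    have hΩne : Ω.Nonempty := ⟨hAne.choose, hA hAne.choose_spec⟩
    have hΩuniv : Ω ≠ Set.univ := by
      intro hu
      have hy : ((|R| + 1) • EuclideanSpace.single (⟨0, hm⟩ : Fin m) (1:ℝ) : Pt m)
          ∈ Metric.closedBall (0 : Pt m) R := hR (hu ▸ Set.mem_univ _)
      rw [Metric.mem_closedBall, dist_zero_right, norm_smul, EuclideanSpace.norm_single] at hy
      simp only [Real.norm_eq_abs, norm_one, mul_one] at hy
      have : |R| + 1 ≤ R := le_trans (le_abs_self _) (by simpa using hy)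
      linarith [le_abs_self R, abs_nonneg R]
    obtain ⟨b, hb⟩ := nonempty_frontier_iff.mpr ⟨hΩne, hΩuniv⟩
    have hbΩ : b ∉ Ω := by
      rw [hΩo.frontier_eq] at hb
      exact hb.2
    have hbA : b ∉ A := fun h => hbΩ (hA h)
    -- trivial one-point graph at b
    have htriv : GSpec {b} b (⟨{b}, ∅, fun _ => 1⟩ : BrGraph m) := by
      constructor
      · rfl
      · exact Finset.mem_singleton_self b
      · intro e he; exact absurd he (Finset.notMem_empty e)
      · intro e he; exact absurd he (Finset.notMem_empty e)
      · intro e he; exact absurd he (Finset.notMem_empty e)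
      · exact Finset.filter_empty _
      · intro a ha hane; exact absurd (Finset.mem_singleton.mp ha) hane
      · simp
    obtain ⟨G'', hspec'', hcost''⟩ := merge htriv hspecA
      (Finset.disjoint_singleton_left.mpr hbA) α
    have htrivcost : BrGraph.cost (m := m) α ⟨{b}, ∅, fun _ => 1⟩ = 0 := by
      simp [BrGraph.cost]
    -- connectivity
    have hconn : G''.IsConn A Ω := by
      refine ⟨?_, ?_, ?_, ?_, ?_, ?_⟩
      · rw [hspec''.hV]; exact Finset.subset_union_right
      · rw [hspec''.hV]
        intro x hx
        rcases Finset.mem_union.mp hx with hx | hx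
        · rw [Finset.mem_singleton.mp hx]
          exact frontier_subset_closure hb
        · exact subset_closure (hA hx)
      · intro e he
        obtain ⟨h1, h2, h3⟩ := hspec''.hE e he
        exact ⟨hspec''.hV ▸ h1, hspec''.hV ▸ h2, h3⟩
      · exact hspec''.hAnti
      · exact hspec''.hd
      · intro a ha hfront
        rw [hspec''.hV] at ha
        rcases Finset.mem_union.mp ha with hab | haA
        · exact absurd (Finset.mem_singleton.mp hab ▸ hb) hfront
        · have hane : a ≠ b := fun h => hbA (h ▸ haA)
          rw [if_pos haA]
          exact hspec''.hKir a (Finset.mem_union_right _ haA) hane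
    -- cost bound
    have hbr : ‖b - r‖ ≤ s := by
      have hbnorm : ‖b‖ ≤ |R| := by
        have hbcl : b ∈ closure Ω := frontier_subset_closure hb
        have : b ∈ Metric.closedBall (0 : Pt m) R :=
          closure_minimal hR Metric.isClosed_closedBall hbcl
        rw [Metric.mem_closedBall, dist_zero_right] at this
        exact this.trans (le_abs_self R)
      have hrnorm : ‖r‖ ≤ |R| := hnorm r hspecA.hr
      calc ‖b - r‖ ≤ ‖b‖ + ‖r‖ := norm_sub_le b r
        _ ≤ s := by rw [hsdef]; linarith
    have hnA : (0:ℝ) ≤ (A.card : ℝ) ^ α := Real.rpow_nonneg (Nat.cast_nonneg _) _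
    have hfinal : G''.cost α ≤ (K + 1) * s * (A.card : ℝ) ^ α := by
      rw [hcost'', htrivcost]
      have h1 : ((A.card : ℝ)) ^ α * ‖b - r‖ ≤ (A.card : ℝ) ^ α * s :=
        mul_le_mul_of_nonneg_left hbr hnA
      calc 0 + G.cost α + ((A.card : ℝ)) ^ α * ‖b - r‖
          ≤ K * s * (A.card : ℝ) ^ α + (A.card : ℝ) ^ α * s := by linarith
        _ = (K + 1) * s * (A.card : ℝ) ^ α := by ring
    refine le_trans (iInf_le_of_le G'' (iInf_le_of_le hconn le_rfl)) ?_
    exact ENNReal.ofReal_le_ofReal hfinal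

end
end

section
/- Let m ≥ 1 be an integer and 0 < α ≤ 1. For all integers 1 ≤ k' ≤ k one has Λ_m^α(k') ≤ (k/k') · Λ_m^α(k), and consequently Ξ_m^α(k') ≤ (k/k')^{mα+1} · Ξ_m^α(k). -/
open scoped ENNReal
open scoped Classical

noncomputable section

/-- The open unit cube `(0,1)^m ⊆ ℝ^m`. -/
def unitCube (m : ℕ) : Set (Pt m) := {x | ∀ j, x j ∈ Set.Ioo (0 : ℝ) 1}

/-- The uniform grid `A_m^k = { (i₁/k, …, i_m/k) : i₁, …, i_m ∈ {1, …, k} }` of `k^m`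
points. -/
def gridA (m k : ℕ) : Finset (Pt m) :=
  (Fintype.piFinset fun _ : Fin m => Finset.Icc 1 k).image
    fun I => (WithLp.equiv 2 (Fin m → ℝ)).symm fun j => (I j : ℝ) / k

/-- `Λ_m^α(k) = ℒ^α_brbd(A_m^k, ∂(0,1)^m)`. -/
def LamGrid (m : ℕ) (α : ℝ) (k : ℕ) : ℝ≥0∞ := Lbrbd m α (gridA m k) (unitCube m)

/-- `Ξ_m^α(k) = k^{−mα} · Λ_m^α(k)`. -/
def XiGrid (m : ℕ) (α : ℝ) (k : ℕ) : ℝ≥0∞ :=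
  ENNReal.ofReal ((k : ℝ) ^ (-((m : ℝ) * α))) * LamGrid m α k

/-! ### Auxiliary lemmas -/

lemma Pt.ext' {m : ℕ} {x y : Pt m} (h : ∀ j, x j = y j) : x = y := (WithLp.ext_iff 2).2 (funext h)

lemma isOpen_unitCube (m : ℕ) : IsOpen (unitCube m) := by
  have : unitCube m = ⋂ j : Fin m, (fun x : Pt m => x j) ⁻¹' Set.Ioo (0:ℝ) 1 := by
    ext x; simp [unitCube]
  rw [this]
  exact isOpen_iInter_of_finite fun j => IsOpen.preimage (PiLp.continuous_apply (p := 2) (β := fun _ : Fin m => ℝ) j) isOpen_Ioo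

lemma closure_unitCube (m : ℕ) :
    closure (unitCube m) = {x : Pt m | ∀ j, x j ∈ Set.Icc (0:ℝ) 1} := by
  have h : unitCube m = PiLp.homeomorph 2 (fun _ : Fin m => ℝ) ⁻¹' (Set.univ.pi fun _ : Fin m => Set.Ioo (0:ℝ) 1) := by
    ext x
    show (∀ j, x j ∈ Set.Ioo (0:ℝ) 1) ↔ ∀ j ∈ Set.univ, x j ∈ Set.Ioo (0:ℝ) 1
    simp
  rw [h, ← Homeomorph.preimage_closure, closure_pi_set]
  ext x
  show (∀ j ∈ Set.univ, x j ∈ closure (Set.Ioo (0:ℝ) 1)) ↔ _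
  simp only [Set.mem_univ, forall_true_left, closure_Ioo (zero_ne_one (α := ℝ)), Set.mem_Icc]
  exact Iff.rfl

/-- clipping map -/
def clipMap (m : ℕ) (lam : ℝ) : Pt m → Pt m :=
  fun x => (WithLp.equiv 2 (Fin m → ℝ)).symm fun j => min (lam * x j) 1

lemma clipMap_apply {m : ℕ} (lam : ℝ) (x : Pt m) (j : Fin m) :
    clipMap m lam x j = min (lam * x j) 1 := rfl

lemma abs_min_sub_min (a b c : ℝ) : |min a c - min b c| ≤ |a - b| := by
  rw [abs_sub_le_iff]
  constructor
  · rcases min_cases b c with ⟨h1, _⟩ | ⟨h1, _⟩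
    · calc min a c - min b c ≤ a - b := by rw [h1]; exact sub_le_sub_right (min_le_left a c) b
        _ ≤ |a - b| := le_abs_self _
    · calc min a c - min b c ≤ 0 := by rw [h1]; exact sub_nonpos.2 (min_le_right a c)
        _ ≤ |a - b| := abs_nonneg _
  · rcases min_cases a c with ⟨h1, _⟩ | ⟨h1, _⟩
    · calc min b c - min a c ≤ b - a := by rw [h1]; exact sub_le_sub_right (min_le_left b c) a
        _ ≤ |a - b| := by rw [abs_sub_comm]; exact le_abs_self _
    · calc min b c - min a c ≤ 0 := by rw [h1]; exact sub_nonpos.2 (min_le_right b c)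
        _ ≤ |a - b| := abs_nonneg _

lemma clipMap_lip {m : ℕ} {lam : ℝ} (hl : 0 ≤ lam) (x y : Pt m) :
    ‖clipMap m lam y - clipMap m lam x‖ ≤ lam * ‖y - x‖ := by
  rw [EuclideanSpace.norm_eq, EuclideanSpace.norm_eq]
  have h1 : ∀ j, ‖(clipMap m lam y - clipMap m lam x) j‖ ^ 2 ≤ lam ^ 2 * ‖(y - x) j‖ ^ 2 := by
    intro j
    have hle : ‖(clipMap m lam y - clipMap m lam x) j‖ ≤ lam * ‖(y - x) j‖ := by
      rw [PiLp.sub_apply, PiLp.sub_apply, clipMap_apply, clipMap_apply]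
      simp only [Real.norm_eq_abs]
      calc |min (lam * y j) 1 - min (lam * x j) 1| ≤ |lam * y j - lam * x j| :=
            abs_min_sub_min _ _ _
        _ = lam * |y j - x j| := by rw [← mul_sub, abs_mul, abs_of_nonneg hl]
    calc ‖(clipMap m lam y - clipMap m lam x) j‖ ^ 2 ≤ (lam * ‖(y - x) j‖) ^ 2 :=
          pow_le_pow_left₀ (norm_nonneg _) hle 2
      _ = lam ^ 2 * ‖(y - x) j‖ ^ 2 := by ring
  calc Real.sqrt (∑ j, ‖(clipMap m lam y - clipMap m lam x) j‖ ^ 2)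
      ≤ Real.sqrt (∑ j, lam ^ 2 * ‖(y - x) j‖ ^ 2) :=
        Real.sqrt_le_sqrt (Finset.sum_le_sum fun j _ => h1 j)
    _ = Real.sqrt (lam ^ 2 * ∑ j, ‖(y - x) j‖ ^ 2) := by rw [Finset.mul_sum]
    _ = lam * Real.sqrt (∑ j, ‖(y - x) j‖ ^ 2) := by
        rw [Real.sqrt_mul (sq_nonneg lam), Real.sqrt_sq hl]

lemma clip_coords {m : ℕ} {lam : ℝ} (hlam : 0 < lam) {a v : Pt m}
    (ha : ∀ j, a j < 1) (h : clipMap m lam v = a) : ∀ j, v j = a j / lam := by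
  intro j
  have hj : min (lam * v j) 1 = a j := by rw [← h]; rfl
  rcases le_total 1 (lam * v j) with hle | hle
  · rw [min_eq_right hle] at hj
    exfalso; linarith [ha j]
  · rw [min_eq_left hle] at hj
    field_simp [hlam.ne']
    linarith [hj]

lemma clip_fix {m : ℕ} {lam : ℝ} (hlam : 0 < lam) {a : Pt m} (ha : ∀ j, a j ≤ 1) :
    clipMap m lam ((WithLp.equiv 2 (Fin m → ℝ)).symm fun j => a j / lam) = a := by
  apply Pt.ext'
  intro j
  show min (lam * (a j / lam)) 1 = a j
  rw [mul_div_cancel₀ _ hlam.ne', min_eq_left (ha j)]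

lemma mem_gridA_iff {m k : ℕ} (a : Pt m) :
    a ∈ gridA m k ↔
      ∃ I : Fin m → ℕ, (∀ j, 1 ≤ I j ∧ I j ≤ k) ∧ ∀ j, a j = (I j : ℝ) / k := by
  rw [gridA, Finset.mem_image]
  constructor
  · rintro ⟨I, hI, rfl⟩
    refine ⟨I, fun j => ?_, fun j => rfl⟩
    have := (Fintype.mem_piFinset.1 hI) j
    exact Finset.mem_Icc.1 this
  · rintro ⟨I, hI, ha⟩
    refine ⟨I, Fintype.mem_piFinset.2 fun j => Finset.mem_Icc.2 (hI j), ?_⟩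
    exact (Pt.ext' fun j => (ha j).symm)

lemma real_rpow_add_le {p x y : ℝ} (hx : 0 ≤ x) (hy : 0 ≤ y) (hp0 : 0 ≤ p) (hp1 : p ≤ 1) :
    (x + y) ^ p ≤ x ^ p + y ^ p := by
  lift x to NNReal using hx
  lift y to NNReal using hy
  have := NNReal.rpow_add_le_add_rpow x y hp0 hp1
  exact_mod_cast this

lemma rpow_natSum_le {ι : Type*} {α : ℝ} (hα0 : 0 < α) (hα1 : α ≤ 1)
    (s : Finset ι) (f : ι → ℕ) :
    ((∑ i ∈ s, f i : ℕ) : ℝ) ^ α ≤ ∑ i ∈ s, ((f i : ℕ) : ℝ) ^ α := by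
  induction s using Finset.cons_induction with
  | empty => simp [Real.zero_rpow hα0.ne']
  | cons a s ha ih =>
      rw [Finset.sum_cons, Finset.sum_cons]
      have h2 : ((f a + ∑ i ∈ s, f i : ℕ) : ℝ) ^ α
          ≤ ((f a : ℕ) : ℝ) ^ α + ((∑ i ∈ s, f i : ℕ) : ℝ) ^ α := by
        rw [Nat.cast_add]
        exact real_rpow_add_le (by positivity) (by positivity) hα0.le hα1
      linarith [ih]

/-! ### The mapped graph -/

def Fl {m : ℕ} (G : BrGraph m) (Φ : Pt m → Pt m) (u v : Pt m) : ℕ :=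
  ∑ e ∈ G.E.filter fun e => Φ e.1 = u ∧ Φ e.2 = v, G.d e

def mapGraph {m : ℕ} (G : BrGraph m) (Φ : Pt m → Pt m) : BrGraph m where
  V := G.V.image Φ
  E := ((G.V.image Φ) ×ˢ (G.V.image Φ)).filter fun p => Fl G Φ p.2 p.1 < Fl G Φ p.1 p.2
  d := fun p => Fl G Φ p.1 p.2 - Fl G Φ p.2 p.1

lemma mem_mapE {m : ℕ} {G : BrGraph m} {Φ : Pt m → Pt m} {p : Pt m × Pt m} :
    p ∈ (mapGraph G Φ).E ↔
      p.1 ∈ G.V.image Φ ∧ p.2 ∈ G.V.image Φ ∧ Fl G Φ p.2 p.1 < Fl G Φ p.1 p.2 := by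
  simp [mapGraph, Finset.mem_filter, Finset.mem_product, and_assoc]

lemma cost_mapGraph_le {m : ℕ} (G : BrGraph m) (Φ : Pt m → Pt m) {lam α : ℝ}
    (hα0 : 0 < α) (hα1 : α ≤ 1) (hlam : 0 ≤ lam)
    (hlip : ∀ e ∈ G.E, ‖Φ e.2 - Φ e.1‖ ≤ lam * ‖e.2 - e.1‖) :
    (mapGraph G Φ).cost α ≤ lam * G.cost α := by
  have hterm : ∀ e' ∈ (mapGraph G Φ).E,
      ((mapGraph G Φ).d e' : ℝ) ^ α * ‖e'.2 - e'.1‖ ≤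
        ∑ e ∈ G.E.filter fun e => Φ e.1 = e'.1 ∧ Φ e.2 = e'.2,
          (G.d e : ℝ) ^ α * (lam * ‖e.2 - e.1‖) := by
    intro e' he'
    have h1 : ((mapGraph G Φ).d e' : ℝ) ^ α ≤
        ∑ e ∈ G.E.filter fun e => Φ e.1 = e'.1 ∧ Φ e.2 = e'.2, (G.d e : ℝ) ^ α := by
      calc ((mapGraph G Φ).d e' : ℝ) ^ α ≤ ((Fl G Φ e'.1 e'.2 : ℕ) : ℝ) ^ α := by
            apply Real.rpow_le_rpow (by positivity) ?_ hα0.le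
            exact_mod_cast Nat.sub_le _ _
        _ ≤ _ := rpow_natSum_le hα0 hα1 _ _
    calc ((mapGraph G Φ).d e' : ℝ) ^ α * ‖e'.2 - e'.1‖
        ≤ (∑ e ∈ G.E.filter fun e => Φ e.1 = e'.1 ∧ Φ e.2 = e'.2, (G.d e : ℝ) ^ α) *
            ‖e'.2 - e'.1‖ := mul_le_mul_of_nonneg_right h1 (norm_nonneg _)
      _ = ∑ e ∈ G.E.filter fun e => Φ e.1 = e'.1 ∧ Φ e.2 = e'.2,
            (G.d e : ℝ) ^ α * ‖e'.2 - e'.1‖ := Finset.sum_mul _ _ _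
      _ ≤ _ := by
          apply Finset.sum_le_sum
          intro e he
          rw [Finset.mem_filter] at he
          apply mul_le_mul_of_nonneg_left _ (by positivity)
          rw [← he.2.1, ← he.2.2]
          exact hlip e he.1
  calc (mapGraph G Φ).cost α
      ≤ ∑ e' ∈ (mapGraph G Φ).E,
          ∑ e ∈ G.E.filter fun e => Φ e.1 = e'.1 ∧ Φ e.2 = e'.2,
            (G.d e : ℝ) ^ α * (lam * ‖e.2 - e.1‖) := Finset.sum_le_sum hterm
    _ = ∑ e ∈ G.E.filter fun e => (Φ e.1, Φ e.2) ∈ (mapGraph G Φ).E,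
          (G.d e : ℝ) ^ α * (lam * ‖e.2 - e.1‖) := by
        have hfib := Finset.sum_fiberwise_of_maps_to (g := fun e => (Φ e.1, Φ e.2))
          (t := (mapGraph G Φ).E)
          (s := G.E.filter fun e => (Φ e.1, Φ e.2) ∈ (mapGraph G Φ).E)
          (fun e he => (Finset.mem_filter.1 he).2)
          (fun e => (G.d e : ℝ) ^ α * (lam * ‖e.2 - e.1‖))
        rw [← hfib]
        apply Finset.sum_congr rfl
        intro e' he'
        apply Finset.sum_congr _ (fun _ _ => rfl)
        rw [Finset.filter_filter]
        apply Finset.filter_congr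
        intro e he
        constructor
        · rintro ⟨h1, h2⟩
          exact ⟨by rw [h1, h2]; simpa using he', Prod.ext h1 h2⟩
        · rintro ⟨_, h⟩
          exact ⟨congrArg Prod.fst h, congrArg Prod.snd h⟩
    _ ≤ ∑ e ∈ G.E, (G.d e : ℝ) ^ α * (lam * ‖e.2 - e.1‖) := by
        apply Finset.sum_le_sum_of_subset_of_nonneg (Finset.filter_subset _ _)
        intro e _ _
        positivity
    _ = lam * G.cost α := by
        rw [BrGraph.cost, Finset.mul_sum]
        apply Finset.sum_congr rfl
        intro e _
        ring

lemma filter_fst_image {m : ℕ} (G : BrGraph m) (Φ : Pt m → Pt m) {a : Pt m}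
    (ha : a ∈ G.V.image Φ) :
    ((mapGraph G Φ).E.filter fun p => p.1 = a) =
      ((G.V.image Φ).filter fun v => Fl G Φ v a < Fl G Φ a v).image fun v => (a, v) := by
  ext p
  obtain ⟨p1, p2⟩ := p
  simp only [Finset.mem_filter, Finset.mem_image, mem_mapE]
  constructor
  · rintro ⟨⟨h1, h2, hlt⟩, heq⟩
    subst heq
    exact ⟨p2, ⟨h2, hlt⟩, rfl⟩
  · rintro ⟨v, ⟨hv, hlt⟩, heq⟩
    rw [Prod.mk.injEq] at heq
    obtain ⟨h1, h2⟩ := heq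
    subst h1; subst h2
    exact ⟨⟨Finset.mem_image.1 ha, hv, hlt⟩, rfl⟩

lemma filter_snd_image {m : ℕ} (G : BrGraph m) (Φ : Pt m → Pt m) {a : Pt m}
    (ha : a ∈ G.V.image Φ) :
    ((mapGraph G Φ).E.filter fun p => p.2 = a) =
      ((G.V.image Φ).filter fun v => Fl G Φ a v < Fl G Φ v a).image fun v => (v, a) := by
  ext p
  obtain ⟨p1, p2⟩ := p
  simp only [Finset.mem_filter, Finset.mem_image, mem_mapE]
  constructor
  · rintro ⟨⟨h1, h2, hlt⟩, heq⟩
    subst heq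
    exact ⟨p1, ⟨h1, hlt⟩, rfl⟩
  · rintro ⟨v, ⟨hv, hlt⟩, heq⟩
    rw [Prod.mk.injEq] at heq
    obtain ⟨h1, h2⟩ := heq
    subst h1; subst h2
    exact ⟨⟨hv, Finset.mem_image.1 ha, hlt⟩, rfl⟩


lemma grid_shift {m k k' : ℕ} (hk' : 1 ≤ k') (hkk : k' ≤ k) {a : Pt m}
    (ha : ∀ j, a j ∈ Set.Ioo (0:ℝ) 1) :
    (a ∈ gridA m k') ↔
      ((WithLp.equiv 2 (Fin m → ℝ)).symm fun j => a j / ((k:ℝ)/(k':ℝ))) ∈ gridA m k := by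
  have hk'0 : (0:ℝ) < k' := by exact_mod_cast hk'
  have hk0 : (0:ℝ) < k := lt_of_lt_of_le hk'0 (by exact_mod_cast hkk)
  have hbj : ∀ j : Fin m,
      ((WithLp.equiv 2 (Fin m → ℝ)).symm fun j => a j / ((k:ℝ)/(k':ℝ))) j
        = a j * k' / k := by
    intro j
    show a j / ((k:ℝ)/(k':ℝ)) = a j * k' / k
    field_simp
  rw [mem_gridA_iff, mem_gridA_iff]
  constructor
  · rintro ⟨I, hI, hco⟩
    refine ⟨I, fun j => ⟨(hI j).1, le_trans (hI j).2 hkk⟩, fun j => ?_⟩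
    rw [hbj j, hco j]
    field_simp
  · rintro ⟨I, hI, hco⟩
    refine ⟨I, fun j => ⟨(hI j).1, ?_⟩, fun j => ?_⟩
    · -- I j ≤ k'
      have h1 : a j * k' / k = (I j : ℝ) / k := by rw [← hbj j, hco j]
      have h2 : a j * k' = (I j : ℝ) := by
        field_simp at h1; linarith
      have h3 : (I j : ℝ) < k' := by
        rw [← h2]
        calc a j * k' < 1 * k' := by
              apply mul_lt_mul_of_pos_right (ha j).2 hk'0
          _ = k' := one_mul _
      exact_mod_cast h3.le
    · -- a j = I j / k'
      have h1 : a j * k' / k = (I j : ℝ) / k := by rw [← hbj j, hco j]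
      field_simp at h1 ⊢
      linarith

lemma isConn_mapGraph (m k k' : ℕ) (hk' : 1 ≤ k') (hkk : k' ≤ k)
    (G : BrGraph m) (hG : G.IsConn (gridA m k) (unitCube m)) :
    (mapGraph G (clipMap m ((k:ℝ)/(k':ℝ)))).IsConn (gridA m k') (unitCube m) := by
  obtain ⟨hA, hV, hE, hrev, hd, hKir⟩ := hG
  have hk'0 : (0:ℝ) < k' := by exact_mod_cast hk'
  have hk0 : (0:ℝ) < k := lt_of_lt_of_le hk'0 (by exact_mod_cast hkk)
  set lam : ℝ := (k:ℝ)/(k':ℝ) with hlamdef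
  have hlam1 : 1 ≤ lam := (one_le_div hk'0).2 (by exact_mod_cast hkk)
  have hlam0 : 0 < lam := lt_of_lt_of_le one_pos hlam1
  set Φ : Pt m → Pt m := clipMap m lam with hPhidef
  -- coordinates of vertices
  have hVco : ∀ v ∈ G.V, ∀ j, v j ∈ Set.Icc (0:ℝ) 1 := by
    intro v hv j
    have := hV (Finset.mem_coe.2 hv)
    rw [closure_unitCube] at this
    exact this j
  have hVsub : ((G.V.image Φ : Finset (Pt m)) : Set (Pt m)) ⊆ closure (unitCube m) := by
    intro x hx
    rw [Finset.mem_coe, Finset.mem_image] at hx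
    obtain ⟨v, hv, rfl⟩ := hx
    rw [closure_unitCube]
    intro j
    rw [hPhidef, clipMap_apply]
    constructor
    · exact le_min (mul_nonneg hlam0.le (hVco v hv j).1) zero_le_one
    · exact min_le_right _ _
  refine ⟨?_, hVsub, ?_, ?_, ?_, ?_⟩
  · -- gridA m k' ⊆ V'
    intro a haA
    rw [mem_gridA_iff] at haA
    obtain ⟨I, hI, hco⟩ := haA
    have hc : ((WithLp.equiv 2 (Fin m → ℝ)).symm fun j => (I j : ℝ) / k) ∈ gridA m k :=
      (mem_gridA_iff _).2 ⟨I, fun j => ⟨(hI j).1, le_trans (hI j).2 hkk⟩, fun j => rfl⟩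
    refine Finset.mem_image.2 ⟨_, hA hc, ?_⟩
    apply Pt.ext'
    intro j
    show min (lam * ((I j : ℝ) / k)) 1 = a j
    have h1 : lam * ((I j : ℝ) / k) = (I j : ℝ) / k' := by
      rw [hlamdef]; field_simp
    rw [h1, hco j, min_eq_left]
    apply div_le_one_of_le₀
    · exact_mod_cast (hI j).2
    · exact hk'0.le
  · -- edges
    intro e' he'
    rw [mem_mapE] at he'
    refine ⟨he'.1, he'.2.1, fun h => ?_⟩
    have := he'.2.2
    rw [h] at this
    exact lt_irrefl _ this
  · -- no reverse
    intro e' he' hrev'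
    rw [mem_mapE] at he' hrev'
    exact lt_asymm he'.2.2 hrev'.2.2
  · -- multiplicities
    intro e' he'
    rw [mem_mapE] at he'
    have := he'.2.2
    show 1 ≤ Fl G Φ e'.1 e'.2 - Fl G Φ e'.2 e'.1
    omega
  · -- Kirchhoff
    intro a haV' hafr
    have haV'' : a ∈ G.V.image Φ := haV'
    have haU : a ∈ unitCube m := by
      by_contra hnot
      apply hafr
      rw [(isOpen_unitCube m).frontier_eq]
      exact ⟨hVsub haV'', hnot⟩
    have haI : ∀ j, a j ∈ Set.Ioo (0:ℝ) 1 := haU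
    set b : Pt m := (WithLp.equiv 2 (Fin m → ℝ)).symm fun j => a j / lam with hbdef
    have hbco : ∀ j, b j = a j / lam := fun j => rfl
    have hPhib : Φ b = a := clip_fix hlam0 (fun j => (haI j).2.le)
    have hpre : ∀ v : Pt m, Φ v = a → v = b := by
      intro v hv
      apply Pt.ext'
      intro j
      rw [hbco]
      exact clip_coords hlam0 (fun j => (haI j).2) hv j
    have hK1 : G.E.filter (fun e => Φ e.1 = a) = G.E.filter (fun e => e.1 = b) := by
      apply Finset.filter_congr
      intro e _
      exact ⟨fun h => hpre _ h, fun h => by rw [h, hPhib]⟩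
    have hK2 : G.E.filter (fun e => Φ e.2 = a) = G.E.filter (fun e => e.2 = b) := by
      apply Finset.filter_congr
      intro e _
      exact ⟨fun h => hpre _ h, fun h => by rw [h, hPhib]⟩
    have hbU : b ∈ unitCube m := by
      intro j
      rw [hbco]
      exact ⟨div_pos (haI j).1 hlam0,
        lt_of_le_of_lt (div_le_self (haI j).1.le hlam1) (haI j).2⟩
    have hbfr : b ∉ frontier (unitCube m) := by
      intro h
      rw [(isOpen_unitCube m).frontier_eq] at h
      exact h.2 hbU
    have hgrid : (a ∈ gridA m k') ↔ b ∈ gridA m k := grid_shift hk' hkk haI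
    set V' := G.V.image Φ with hV'def
    -- the two sums, in ℤ
    have hSout : ((∑ p ∈ (mapGraph G Φ).E.filter (fun p => p.1 = a), (mapGraph G Φ).d p : ℕ) : ℤ)
        = ∑ v ∈ V'.filter (fun v => Fl G Φ v a < Fl G Φ a v), ((Fl G Φ a v : ℤ) - Fl G Φ v a) := by
      rw [filter_fst_image G Φ haV'',
        Finset.sum_image (by intro x _ y _ h; exact congrArg Prod.snd h), Nat.cast_sum]
      apply Finset.sum_congr rfl
      intro v hv
      have hlt := (Finset.mem_filter.1 hv).2
      show ((Fl G Φ a v - Fl G Φ v a : ℕ) : ℤ) = _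
      omega
    have hSin : ((∑ p ∈ (mapGraph G Φ).E.filter (fun p => p.2 = a), (mapGraph G Φ).d p : ℕ) : ℤ)
        = ∑ v ∈ V'.filter (fun v => Fl G Φ a v < Fl G Φ v a), ((Fl G Φ v a : ℤ) - Fl G Φ a v) := by
      rw [filter_snd_image G Φ haV'',
        Finset.sum_image (by intro x _ y _ h; exact congrArg Prod.fst h), Nat.cast_sum]
      apply Finset.sum_congr rfl
      intro v hv
      have hlt := (Finset.mem_filter.1 hv).2
      show ((Fl G Φ v a - Fl G Φ a v : ℕ) : ℤ) = _
      omega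
    have hsplit : (∑ v ∈ V'.filter (fun v => Fl G Φ v a < Fl G Φ a v), ((Fl G Φ a v : ℤ) - Fl G Φ v a))
        - (∑ v ∈ V'.filter (fun v => Fl G Φ a v < Fl G Φ v a), ((Fl G Φ v a : ℤ) - Fl G Φ a v))
        = ∑ v ∈ V', ((Fl G Φ a v : ℤ) - Fl G Φ v a) := by
      have hQsub : V'.filter (fun v => Fl G Φ a v < Fl G Φ v a) ⊆
          V'.filter (fun v => ¬ (Fl G Φ v a < Fl G Φ a v)) := by
        intro v hv
        rw [Finset.mem_filter] at hv ⊢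
        exact ⟨hv.1, fun h => lt_asymm hv.2 h⟩
      have e1 : (∑ v ∈ V'.filter (fun v => Fl G Φ a v < Fl G Φ v a), ((Fl G Φ v a : ℤ) - Fl G Φ a v))
          = ∑ v ∈ V'.filter (fun v => ¬ (Fl G Φ v a < Fl G Φ a v)), ((Fl G Φ v a : ℤ) - Fl G Φ a v) := by
        apply Finset.sum_subset hQsub
        intro v hv hnv
        rw [Finset.mem_filter] at hv hnv
        have h1 : ¬ (Fl G Φ v a < Fl G Φ a v) := hv.2
        have h2 : ¬ (Fl G Φ a v < Fl G Φ v a) := fun h => hnv ⟨hv.1, h⟩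
        omega
      rw [e1, ← Finset.sum_filter_add_sum_filter_not V' (fun v => Fl G Φ v a < Fl G Φ a v)
        (fun v => (Fl G Φ a v : ℤ) - Fl G Φ v a)]
      rw [sub_eq_add_neg, ← Finset.sum_neg_distrib]
      congr 1
      apply Finset.sum_congr rfl
      intro v _
      ring
    have hout : (∑ v ∈ V', (Fl G Φ a v : ℤ))
        = ((∑ e ∈ G.E.filter (fun e => e.1 = b), G.d e : ℕ) : ℤ) := by
      rw [← hK1, Nat.cast_sum]
      rw [← Finset.sum_fiberwise_of_maps_to (g := fun e => Φ e.2) (t := V')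
        (s := G.E.filter fun e => Φ e.1 = a)
        (fun e he => Finset.mem_image_of_mem Φ (hE e (Finset.mem_filter.1 he).1).2.1)
        (fun e => (G.d e : ℤ))]
      apply Finset.sum_congr rfl
      intro v _
      rw [Finset.filter_filter]
      show ((Fl G Φ a v : ℕ) : ℤ) = _
      rw [Fl, Nat.cast_sum]
    have hin : (∑ v ∈ V', (Fl G Φ v a : ℤ))
        = ((∑ e ∈ G.E.filter (fun e => e.2 = b), G.d e : ℕ) : ℤ) := by
      rw [← hK2, Nat.cast_sum]
      rw [← Finset.sum_fiberwise_of_maps_to (g := fun e => Φ e.1) (t := V')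
        (s := G.E.filter fun e => Φ e.2 = a)
        (fun e he => Finset.mem_image_of_mem Φ (hE e (Finset.mem_filter.1 he).1).1)
        (fun e => (G.d e : ℤ))]
      apply Finset.sum_congr rfl
      intro v _
      rw [Finset.filter_filter]
      show ((Fl G Φ v a : ℕ) : ℤ) = _
      rw [Fl, Nat.cast_sum]
      apply Finset.sum_congr _ (fun x _ => rfl)
      apply Finset.filter_congr
      intro e _
      exact and_comm
    have hNsum : ∑ v ∈ V', ((Fl G Φ a v : ℤ) - Fl G Φ v a)
        = ((∑ e ∈ G.E.filter (fun e => e.1 = b), G.d e : ℕ) : ℤ)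
          - ((∑ e ∈ G.E.filter (fun e => e.2 = b), G.d e : ℕ) : ℤ) := by
      rw [Finset.sum_sub_distrib, hout, hin]
    have hmain : ((∑ p ∈ (mapGraph G Φ).E.filter (fun p => p.1 = a), (mapGraph G Φ).d p : ℕ) : ℤ)
        - ((∑ p ∈ (mapGraph G Φ).E.filter (fun p => p.2 = a), (mapGraph G Φ).d p : ℕ) : ℤ)
        = ((∑ e ∈ G.E.filter (fun e => e.1 = b), G.d e : ℕ) : ℤ)
          - ((∑ e ∈ G.E.filter (fun e => e.2 = b), G.d e : ℕ) : ℤ) := by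
      rw [hSout, hSin, hsplit, hNsum]
    by_cases hb : b ∈ G.V
    · have hKir' := hKir b hb hbfr
      by_cases hag : a ∈ gridA m k'
      · have hbg : b ∈ gridA m k := hgrid.1 hag
        rw [if_pos hbg] at hKir'
        rw [if_pos hag]
        omega
      · have hbg : b ∉ gridA m k := fun h => hag (hgrid.2 h)
        rw [if_neg hbg] at hKir'
        rw [if_neg hag]
        omega
    · have h1 : G.E.filter (fun e => e.1 = b) = ∅ := by
        rw [Finset.filter_eq_empty_iff]
        intro e he h
        exact hb (h ▸ (hE e he).1)
      have h2 : G.E.filter (fun e => e.2 = b) = ∅ := by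
        rw [Finset.filter_eq_empty_iff]
        intro e he h
        exact hb (h ▸ (hE e he).2.1)
      have hag : a ∉ gridA m k' := fun h => hb (hA (hgrid.1 h))
      rw [if_neg hag]
      rw [h1, h2] at hmain
      simp only [Finset.sum_empty, Nat.cast_zero, sub_zero] at hmain
      omega

lemma lamGrid_le (m : ℕ) {α : ℝ} (hα0 : 0 < α) (hα1 : α ≤ 1)
    (k k' : ℕ) (hk' : 1 ≤ k') (hkk : k' ≤ k) :
    LamGrid m α k' ≤ ENNReal.ofReal ((k : ℝ) / (k' : ℝ)) * LamGrid m α k := by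
  have hk'0 : (0:ℝ) < k' := by exact_mod_cast hk'
  have hc1 : (1:ℝ) ≤ (k:ℝ)/(k':ℝ) := (one_le_div hk'0).2 (by exact_mod_cast hkk)
  set c := ENNReal.ofReal ((k:ℝ)/(k':ℝ)) with hc
  have hc0 : c ≠ 0 := by
    rw [hc, Ne, ENNReal.ofReal_eq_zero]
    push_neg
    linarith
  have hct : c ≠ ⊤ := ENNReal.ofReal_ne_top
  have key : ∀ G : BrGraph m, G.IsConn (gridA m k) (unitCube m) →
      LamGrid m α k' ≤ c * ENNReal.ofReal (G.cost α) := by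
    intro G hG
    set Φ := clipMap m ((k:ℝ)/(k':ℝ)) with hPhi
    have hlam0 : (0:ℝ) ≤ (k:ℝ)/(k':ℝ) := le_trans zero_le_one hc1
    have hconn := isConn_mapGraph m k k' hk' hkk G hG
    have hcost : (mapGraph G Φ).cost α ≤ ((k:ℝ)/(k':ℝ)) * G.cost α :=
      cost_mapGraph_le G Φ hα0 hα1 hlam0 (fun e _ => clipMap_lip hlam0 e.1 e.2)
    calc LamGrid m α k' ≤ ENNReal.ofReal ((mapGraph G Φ).cost α) := by
          rw [LamGrid, Lbrbd]
          exact iInf_le_of_le (mapGraph G Φ) (iInf_le_of_le hconn (le_refl _))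
      _ ≤ ENNReal.ofReal (((k:ℝ)/(k':ℝ)) * G.cost α) := ENNReal.ofReal_le_ofReal hcost
      _ = c * ENNReal.ofReal (G.cost α) := ENNReal.ofReal_mul hlam0
  have hdiv : LamGrid m α k' / c ≤ LamGrid m α k := by
    rw [LamGrid, Lbrbd]
    refine le_iInf fun G => le_iInf fun hG => ?_
    rw [ENNReal.div_le_iff_le_mul (Or.inl hc0) (Or.inl hct), mul_comm]
    exact key G hG
  have := (ENNReal.div_le_iff_le_mul (Or.inl hc0) (Or.inl hct)).1 hdiv
  rwa [mul_comm] at this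

/-- For `m ≥ 1`, `0 < α ≤ 1` and integers `1 ≤ k' ≤ k` one has
`Λ_m^α(k') ≤ (k/k')·Λ_m^α(k)` and hence `Ξ_m^α(k') ≤ (k/k')^{mα+1}·Ξ_m^α(k)`. -/
theorem statement14 (m : ℕ) (hm : 1 ≤ m) (α : ℝ) (hα0 : 0 < α) (hα1 : α ≤ 1)
    (k k' : ℕ) (hk' : 1 ≤ k') (hkk : k' ≤ k) :
    LamGrid m α k' ≤ ENNReal.ofReal ((k : ℝ) / (k' : ℝ)) * LamGrid m α k ∧
    XiGrid m α k' ≤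
      ENNReal.ofReal (((k : ℝ) / (k' : ℝ)) ^ ((m : ℝ) * α + 1)) * XiGrid m α k := by
  have hlam := lamGrid_le m hα0 hα1 k k' hk' hkk
  refine ⟨hlam, ?_⟩
  have hk'0 : (0:ℝ) < k' := by exact_mod_cast hk'
  have hk0 : (0:ℝ) < k := lt_of_lt_of_le hk'0 (by exact_mod_cast hkk)
  set q : ℝ := (m : ℝ) * α with hq
  have hlamr0 : (0:ℝ) < (k:ℝ)/(k':ℝ) := div_pos hk0 hk'0
  have hid : (k':ℝ) ^ (-q) * ((k:ℝ)/(k':ℝ)) = ((k:ℝ)/(k':ℝ)) ^ (q + 1) * (k:ℝ) ^ (-q) := by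
    rw [Real.rpow_add hlamr0, Real.rpow_one, Real.div_rpow hk0.le hk'0.le,
      Real.rpow_neg hk0.le, Real.rpow_neg hk'0.le]
    have h1 : (0:ℝ) < (k:ℝ) ^ q := Real.rpow_pos_of_pos hk0 q
    have h2 : (0:ℝ) < (k':ℝ) ^ q := Real.rpow_pos_of_pos hk'0 q
    field_simp
  calc XiGrid m α k' = ENNReal.ofReal ((k':ℝ) ^ (-q)) * LamGrid m α k' := rfl
    _ ≤ ENNReal.ofReal ((k':ℝ) ^ (-q)) *
        (ENNReal.ofReal ((k:ℝ)/(k':ℝ)) * LamGrid m α k) := mul_le_mul_right hlam _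
    _ = (ENNReal.ofReal ((k':ℝ) ^ (-q)) * ENNReal.ofReal ((k:ℝ)/(k':ℝ))) * LamGrid m α k := by
        rw [mul_assoc]
    _ = ENNReal.ofReal ((k':ℝ) ^ (-q) * ((k:ℝ)/(k':ℝ))) * LamGrid m α k := by
        rw [ENNReal.ofReal_mul (Real.rpow_nonneg hk'0.le _)]
    _ = ENNReal.ofReal (((k:ℝ)/(k':ℝ)) ^ (q + 1) * (k:ℝ) ^ (-q)) * LamGrid m α k := by
        rw [hid]
    _ = ENNReal.ofReal (((k:ℝ)/(k':ℝ)) ^ (q + 1)) *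
        (ENNReal.ofReal ((k:ℝ) ^ (-q)) * LamGrid m α k) := by
        rw [ENNReal.ofReal_mul (Real.rpow_nonneg hlamr0.le _), mul_assoc]
    _ = ENNReal.ofReal (((k:ℝ)/(k':ℝ)) ^ ((m:ℝ) * α + 1)) * XiGrid m α k := rfl



end
end
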